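/- arXiv:2603.29008 — 3 statements merged into one kernel-verified Lean document; each statement's English description precedes it below -/
import Mathlib

section
/- Let Γ be a finite simple graph and n ≥ 0 an integer. If Γ either is a complete graph with n+1 vertices, or contains a complete subgraph Λ of size n together with a subgraph Λ₀ ⊆ Λ whose removal disconnects Γ, then the right-angled Artin group A(Γ) splits non-trivially over a subgroup isomorphic to ℤ^n. -/
/-! ## Right-angled Artin groups -/

/-- The commutator relations defining the right-angled Artin group of a graph. -/
def raagRels {V : Type*} (Γ : SimpleGraph V) : Set (FreeGroup V) :=
  {r | ∃ u v : V, Γ.Adj u v ∧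
    r = FreeGroup.of u * FreeGroup.of v * (FreeGroup.of u)⁻¹ * (FreeGroup.of v)⁻¹}

/-- The right-angled Artin group of a simple graph. -/
abbrev RAAG {V : Type*} (Γ : SimpleGraph V) : Type _ := PresentedGroup (raagRels Γ)

/-- The canonical generator of `RAAG Γ` associated to a vertex. -/
abbrev RAAG.gen {V : Type*} (Γ : SimpleGraph V) (v : V) : RAAG Γ :=
  PresentedGroup.of v

/-- The canonical generating set of a right-angled Artin group: its vertex generators. -/
def raagGens {V : Type*} (Γ : SimpleGraph V) : Set (RAAG Γ) :=
  Set.range (RAAG.gen Γ)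

/-- The subgroup of `RAAG Γ` generated by (the generators corresponding to) a set of
vertices. -/
def vertexSubgroup {V : Type*} (Γ : SimpleGraph V) (Λ : Set V) : Subgroup (RAAG Γ) :=
  Subgroup.closure (RAAG.gen Γ '' Λ)

/-! ## Free abelian groups ℤ^n (written multiplicatively) -/

/-- The free abelian group `ℤ^n` of rank `n`, written multiplicatively. -/
abbrev FreeAb (n : ℕ) : Type := Multiplicative (Fin n → ℤ)

/-! ## Word metric and coarse separation -/

section Coarse

variable {G : Type*} [Group G]

/-- `S` is a finite generating set of `G`. -/
def IsFinGenSet (S : Set G) : Prop := S.Finite ∧ Subgroup.closure S = ⊤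

/-- One step in the Cayley graph of `(G, S)`: multiply on the right by a generator or
the inverse of a generator. -/
def WordStep (S : Set G) (x y : G) : Prop := ∃ s : G, (s ∈ S ∨ s⁻¹ ∈ S) ∧ y = x * s

/-- The word distance between two elements of `G`, with respect to the (symmetrised)
generating set `S`, with value `⊤` if `y` is not reachable from `x`. -/
noncomputable def wordDist (S : Set G) (x y : G) : ℕ∞ :=
  sInf {n : ℕ∞ | ∃ l : List G, (∀ s ∈ l, s ∈ S ∨ s⁻¹ ∈ S) ∧ y = x * l.prod ∧ n = l.length}

/-- The word distance from a subset `A ⊆ G` to a point. -/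
noncomputable def setWordDist (S : Set G) (A : Set G) (x : G) : ℕ∞ :=
  ⨅ a ∈ A, wordDist S a x

/-- The (closed) `L`-neighbourhood of a subset `A ⊆ G` in the word metric of `S`. -/
def wordNbhd (S : Set G) (A : Set G) (L : ℕ) : Set G :=
  {x | setWordDist S A x ≤ (L : ℕ∞)}

/-- Two points are connected within the subset `K` of the Cayley graph of `(G, S)` if they
are joined by a path of the Cayley graph staying in `K`. -/
def ConnectedInCayley (S : Set G) (K : Set G) (x y : G) : Prop :=
  Relation.ReflTransGen (fun a b => a ∈ K ∧ b ∈ K ∧ WordStep S a b) x y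

/-- The connected component of `x` in `K ⊆ G` (for the Cayley graph of `(G,S)`) is *deep*
with respect to `A`: it contains points arbitrarily far away from `A`. -/
def DeepComponent (S : Set G) (A : Set G) (K : Set G) (x : G) : Prop :=
  ∀ D : ℕ, ∃ y : G, ConnectedInCayley S K x y ∧ (D : ℕ∞) < setWordDist S A y

/-- A subset `A ⊆ G` *coarsely separates* `G` (with respect to the word metric associated
to `S`): the complement of some neighbourhood of `A` has at least two deep connected
components. -/
def CoarselySeparates (S : Set G) (A : Set G) : Prop :=
  ∃ L : ℕ, ∃ x y : G, x ∈ (wordNbhd S A L)ᶜ ∧ y ∈ (wordNbhd S A L)ᶜ ∧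
    ¬ ConnectedInCayley S (wordNbhd S A L)ᶜ x y ∧
    DeepComponent S A (wordNbhd S A L)ᶜ x ∧ DeepComponent S A (wordNbhd S A L)ᶜ y

end Coarse

/-! ## Splittings of groups -/

/-- The amalgamated free product of two groups along two injections of a common
subgroup, built as a quotient of the free product `Monoid.Coprod`. -/
def AmalgamatedProduct {A B C : Type*} [Group A] [Group B] [Group C]
    (φ₁ : C →* A) (φ₂ : C →* B) : Type _ :=
  (Monoid.Coprod A B) ⧸ Subgroup.normalClosure
    (Set.range fun c => Monoid.Coprod.inl (φ₁ c) * (Monoid.Coprod.inr (φ₂ c))⁻¹)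

noncomputable instance {A B C : Type*} [Group A] [Group B] [Group C]
    (φ₁ : C →* A) (φ₂ : C →* B) : Group (AmalgamatedProduct φ₁ φ₂) := by
  unfold AmalgamatedProduct; infer_instance

/-- A non-trivial decomposition of `G` as an amalgamated free product `A *_C B`,
with edge group `C`. -/
structure AmalgamSplitting (G : Type u) [Group G] (C : Type v) [Group C] where
  A : Type u
  B : Type u
  [grpA : Group A]
  [grpB : Group B]
  φ₁ : C →* A
  φ₂ : C →* B
  inj₁ : Function.Injective φ₁
  inj₂ : Function.Injective φ₂
  notSurj₁ : ¬ Function.Surjective φ₁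
  notSurj₂ : ¬ Function.Surjective φ₂
  iso : G ≃* AmalgamatedProduct φ₁ φ₂

/-- A decomposition of `G` as an HNN extension with edge group (isomorphic to) `C`. -/
structure HNNSplitting (G : Type u) [Group G] (C : Type v) [Group C] where
  K : Type u
  [grpK : Group K]
  A : Subgroup K
  B : Subgroup K
  φ : A ≃* B
  isoC : C ≃* A
  iso : G ≃* HNNExtension K A B φ

/-- `G` splits (non-trivially) over a subgroup isomorphic to `C`: it decomposes
non-trivially as an amalgamated free product or as an HNN extension with edge group `C`. -/
def SplitsOver (G : Type u) [Group G] (C : Type v) [Group C] : Prop :=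
  Nonempty (AmalgamSplitting G C) ∨ Nonempty (HNNSplitting G C)

/-- `G` virtually splits over (a subgroup isomorphic to) `C`: some finite-index subgroup
of `G` splits over a subgroup isomorphic to `C`. -/
def VirtuallySplitsOver (G : Type u) [Group G] (C : Type v) [Group C] : Prop :=
  ∃ H : Subgroup G, H.FiniteIndex ∧ SplitsOver H C

/-! ## Graph-theoretic conditions -/

section Graph

variable {V : Type*}

/-- Removing the vertex set `s` from `Γ` disconnects the graph: the induced subgraph on
the complement of `s` is not preconnected. -/
def SeparatesGraph (Γ : SimpleGraph V) (s : Set V) : Prop :=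
  ¬ (Γ.induce {v : V | v ∉ s}).Preconnected

/-- `Γ` is a complete graph. -/
def IsCompleteGraph (Γ : SimpleGraph V) : Prop := ∀ u v : V, u ≠ v → Γ.Adj u v

/-- A *complete cut* of a graph: a complete subgraph (clique) whose removal disconnects
the graph. -/
def CompleteCut (Γ : SimpleGraph V) (s : Set V) : Prop :=
  Γ.IsClique s ∧ SeparatesGraph Γ s

/-- Condition (iv) of the main theorem: `Γ` is a complete graph with `n+1` vertices, or
contains a complete subgraph of size `n` having a subgraph that separates `Γ`. -/
def CliqueCutCondition (Γ : SimpleGraph V) [Fintype V] (n : ℕ) : Prop :=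
  (IsCompleteGraph Γ ∧ Fintype.card V = n + 1) ∨
  (∃ t : Finset V, Γ.IsNClique n t ∧ ∃ s : Set V, s ⊆ ↑t ∧ SeparatesGraph Γ s)

end Graph

/-! ## Links and stars -/

section LinkStar

variable {V : Type*}

/-- The link of a set of vertices: all vertices adjacent to every vertex of `Λ`. -/
def linkSet (Γ : SimpleGraph V) (Λ : Set V) : Set V := {v | ∀ u ∈ Λ, Γ.Adj v u}

/-- The star of a set of vertices: `Λ` together with its link. -/
def starSet (Γ : SimpleGraph V) (Λ : Set V) : Set V := Λ ∪ linkSet Γ Λ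

/-- The star of a vertex: the vertex together with its neighbours. -/
def starOfVertex (Γ : SimpleGraph V) (u : V) : Set V := {v | v = u ∨ Γ.Adj u v}

end LinkStar

/-! ## Coarse geometry of graphs -/

section CoarseGraph

variable {W : Type*}

/-- The `L`-neighbourhood of a set of vertices in a graph, for the graph metric. -/
def graphNbhd (X : SimpleGraph W) (A : Set W) (L : ℕ) : Set W :=
  {x | ∃ a ∈ A, X.dist a x ≤ L}

/-- Two vertices are connected within `K`: joined by a path of `X` staying in `K`. -/
def ConnectedWithin (X : SimpleGraph W) (K : Set W) (x y : W) : Prop :=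
  Relation.ReflTransGen (fun a b => a ∈ K ∧ b ∈ K ∧ X.Adj a b) x y

/-- `x` is at graph distance at least `D` from every point of `A`. -/
def FarFrom (X : SimpleGraph W) (A : Set W) (D : ℕ) (x : W) : Prop :=
  ∀ a ∈ A, D ≤ X.dist a x

/-- A subset `Y` of a graph is coarsely connected: for some `r ≥ 0`, any two points of `Y`
are joined by an `r`-chain inside `Y`. -/
def CoarselyConnectedIn (X : SimpleGraph W) (Y : Set W) : Prop :=
  ∃ r : ℕ, ∀ x ∈ Y, ∀ y ∈ Y,
    Relation.ReflTransGen (fun a b => a ∈ Y ∧ b ∈ Y ∧ X.dist a b ≤ r) x y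

/-- A subset `Y` of a graph `X` is coarsely separated by a family `Zs` of subsets:
for some `L ≥ 0` and every `D ≥ 0`, there is `Z ∈ Zs` such that `Y` minus the
`L`-neighbourhood of `Z` has at least two connected components containing points at
distance at least `D` from `Z`. -/
def CoarselySeparatedByFamily (X : SimpleGraph W) (Y : Set W) (Zs : Set (Set W)) : Prop :=
  ∃ L : ℕ, ∀ D : ℕ, ∃ Z ∈ Zs, ∃ x ∈ Y \ graphNbhd X Z L, ∃ y ∈ Y \ graphNbhd X Z L,
    ¬ ConnectedWithin X (Y \ graphNbhd X Z L) x y ∧ FarFrom X Z D x ∧ FarFrom X Z D y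

/-- `Z` coarsely separates `Y` from `W'` in the graph `X`: some neighbourhood of `Z`
separates all points of `Y` sufficiently far from `Z` from all points of `W'`
sufficiently far from `Z`. -/
def CoarselySeparatesFrom (X : SimpleGraph W) (Z Y W' : Set W) : Prop :=
  ∃ L D₀ : ℕ, ∀ y ∈ Y, ∀ w ∈ W', FarFrom X Z D₀ y → FarFrom X Z D₀ w →
    ¬ ConnectedWithin X (graphNbhd X Z L)ᶜ y w




/-! ## Auxiliary machinery for the proof -/

section FabHelpers
open Multiplicative

variable {n : ℕ} {G : Type*} [Group G]

def fabBasis {n : ℕ} (i : Fin n) : FreeAb n := ofAdd (Pi.single i 1)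

lemma fabBasis_zpow (i : Fin n) (k : ℤ) : (fabBasis i) ^ k = ofAdd (Pi.single i k) := by
  have : (fabBasis i) ^ k = ofAdd (k • Pi.single i (1 : ℤ)) := rfl
  rw [this]
  congr 1
  funext j
  by_cases h : j = i <;> simp [Pi.single_apply, h]

lemma fab_eq_prod (x : FreeAb n) : x = ∏ i, fabBasis i ^ (toAdd x i) := by
  simp_rw [fabBasis_zpow]
  rw [← ofAdd_sum, Finset.univ_sum_single]
  rfl

lemma fab_closure : Subgroup.closure (Set.range (fabBasis (n := n))) = ⊤ := by
  rw [Subgroup.eq_top_iff']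
  intro x
  rw [fab_eq_prod x]
  refine Subgroup.prod_mem _ fun i _ => Subgroup.zpow_mem _ ?_ _
  exact Subgroup.subset_closure (Set.mem_range_self i)

lemma fab_hom_ext {f g : FreeAb n →* G} (h : ∀ i, f (fabBasis i) = g (fabBasis i)) : f = g := by
  ext x
  have h2 : Set.EqOn (⇑f) (⇑g) ↑(Subgroup.closure (Set.range (fabBasis (n := n)))) :=
    MonoidHom.eqOn_closure (by rintro _ ⟨i, rfl⟩; exact h i)
  rw [fab_closure] at h2
  exact h2 (Subgroup.mem_top (G := FreeAb n) x)

noncomputable def freeAbHom (g : Fin n → G) (hg : ∀ i j, Commute (g i) (g j)) :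
    FreeAb n →* G :=
  (MonoidHom.noncommPiCoprod (fun i => (zpowersHom G (g i)))
    (fun i j _ => fun x y => (hg i j).zpow_zpow (toAdd x) (toAdd y))).comp
    (MulEquiv.funMultiplicative (Fin n) ℤ).toMonoidHom

@[simp] lemma freeAbHom_basis (g : Fin n → G) (hg : ∀ i j, Commute (g i) (g j)) (i : Fin n) :
    freeAbHom g hg (fabBasis i) = g i := by
  have h1 : (MulEquiv.funMultiplicative (Fin n) ℤ) (fabBasis i)
      = Pi.mulSingle i (ofAdd (1 : ℤ)) := by
    funext j
    by_cases h : j = i <;>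
      simp [MulEquiv.funMultiplicative, MulEquiv.piMultiplicative, fabBasis,
        Pi.single_apply, Pi.mulSingle_apply, h]
  simp only [freeAbHom, MonoidHom.comp_apply, MulEquiv.toMonoidHom_eq_coe,
    MonoidHom.coe_coe, h1]
  exact (MonoidHom.noncommPiCoprod_mulSingle (fun i => zpowersHom G (g i)) i (ofAdd (1:ℤ))).trans (by simp)

lemma freeAbHom_injective (f : FreeAb n →* G) (r : G →* FreeAb n) (d : Fin n → ℤ)
    (hd : ∀ i, d i ≠ 0) (h : ∀ i, r (f (fabBasis i)) = fabBasis i ^ (d i)) :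
    Function.Injective f := by
  have key : ∀ x : FreeAb n, (r.comp f) x = ofAdd (fun i => d i * toAdd x i) := by
    intro x
    conv_lhs => rw [fab_eq_prod x]
    rw [map_prod]
    simp_rw [map_zpow, MonoidHom.comp_apply, h, ← zpow_mul, fabBasis_zpow, ← ofAdd_sum]
    congr 1
    exact Finset.univ_sum_single (fun i => d i * toAdd x i)
  intro x y hxy
  have h2 : (r.comp f) x = (r.comp f) y := by simp [MonoidHom.comp_apply, hxy]
  rw [key, key] at h2
  have h3 := ofAdd.injective h2
  have h4 : toAdd x = toAdd y := by
    funext i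
    exact mul_left_cancel₀ (hd i) (congrFun h3 i)
  exact toAdd.injective h4
end FabHelpers

section RaagHelpers
open scoped commutatorElement
variable {V : Type*} {G : Type*} [Group G] (Γ : SimpleGraph V)

def raagHom (f : V → G) (h : ∀ u v, Γ.Adj u v → Commute (f u) (f v)) : RAAG Γ →* G :=
  PresentedGroup.toGroup (f := f) (by
    rintro r ⟨u, v, huv, rfl⟩
    simp only [map_mul, map_inv, FreeGroup.lift_apply_of]
    have : f u * f v * (f u)⁻¹ * (f v)⁻¹ = ⁅f u, f v⁆ := by
      rw [commutatorElement_def]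
    rw [this, commutatorElement_eq_one_iff_commute]
    exact h u v huv)

@[simp] lemma raagHom_gen (f : V → G) (h : ∀ u v, Γ.Adj u v → Commute (f u) (f v)) (v : V) :
    raagHom Γ f h (RAAG.gen Γ v) = f v :=
  PresentedGroup.toGroup.of _

lemma raag_gen_commute {u v : V} (h : Γ.Adj u v) :
    Commute (RAAG.gen Γ u) (RAAG.gen Γ v) := by
  have hmem : FreeGroup.of u * FreeGroup.of v * (FreeGroup.of u)⁻¹ * (FreeGroup.of v)⁻¹
      ∈ Subgroup.normalClosure (raagRels Γ) :=
    Subgroup.subset_normalClosure ⟨u, v, h, rfl⟩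
  have h1 : PresentedGroup.mk (raagRels Γ)
      (FreeGroup.of u * FreeGroup.of v * (FreeGroup.of u)⁻¹ * (FreeGroup.of v)⁻¹) = 1 :=
    (QuotientGroup.eq_one_iff _).2 hmem
  simp only [map_mul, map_inv] at h1
  rw [← commutatorElement_eq_one_iff_commute, commutatorElement_def]
  exact h1

lemma raag_hom_ext {f g : RAAG Γ →* G} (h : ∀ v, f (RAAG.gen Γ v) = g (RAAG.gen Γ v)) :
    f = g :=
  PresentedGroup.ext h
end RaagHelpers

section AmalgHelpers

variable {C : Type v} {P Q : Type u} [Group C] [Group P] [Group Q]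
  (φ₁ : C →* P) (φ₂ : C →* Q)

def amalgN : Subgroup (Monoid.Coprod P Q) :=
  Subgroup.normalClosure
    (Set.range fun c => Monoid.Coprod.inl (φ₁ c) * (Monoid.Coprod.inr (φ₂ c))⁻¹)

instance : (amalgN φ₁ φ₂).Normal := Subgroup.normalClosure_normal

def amalgMk : Monoid.Coprod P Q →* AmalgamatedProduct φ₁ φ₂ :=
  QuotientGroup.mk' (amalgN φ₁ φ₂)

lemma amalgMk_surjective : Function.Surjective (amalgMk φ₁ φ₂) :=
  QuotientGroup.mk'_surjective _

noncomputable def amalgInl : P →* AmalgamatedProduct φ₁ φ₂ :=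
  (amalgMk φ₁ φ₂).comp Monoid.Coprod.inl

noncomputable def amalgInr : Q →* AmalgamatedProduct φ₁ φ₂ :=
  (amalgMk φ₁ φ₂).comp Monoid.Coprod.inr

lemma amalg_comm (c : C) : amalgInl φ₁ φ₂ (φ₁ c) = amalgInr φ₁ φ₂ (φ₂ c) := by
  have h1 : amalgMk φ₁ φ₂ (Monoid.Coprod.inl (φ₁ c) * (Monoid.Coprod.inr (φ₂ c))⁻¹) = 1 :=
    (QuotientGroup.eq_one_iff _).2 (Subgroup.subset_normalClosure (Set.mem_range_self c))
  rw [map_mul, map_inv, mul_inv_eq_one] at h1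
  exact h1

variable {G : Type u} [Group G]

noncomputable def amalgLift (p : P →* G) (q : Q →* G) (hpq : ∀ c, p (φ₁ c) = q (φ₂ c)) :
    AmalgamatedProduct φ₁ φ₂ →* G :=
  QuotientGroup.lift (amalgN φ₁ φ₂) (Monoid.Coprod.lift p q) (by
    intro x hx
    have hker : amalgN φ₁ φ₂ ≤ (Monoid.Coprod.lift p q).ker := by
      apply Subgroup.normalClosure_le_normal
      rintro _ ⟨c, rfl⟩
      rw [SetLike.mem_coe, MonoidHom.mem_ker, map_mul, map_inv,
        Monoid.Coprod.lift_apply_inl, Monoid.Coprod.lift_apply_inr, hpq c, mul_inv_cancel]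
    exact hker hx)

@[simp] lemma amalgLift_inl (p : P →* G) (q : Q →* G) (hpq : ∀ c, p (φ₁ c) = q (φ₂ c))
    (x : P) : amalgLift φ₁ φ₂ p q hpq (amalgInl φ₁ φ₂ x) = p x := by
  rfl

@[simp] lemma amalgLift_inr (p : P →* G) (q : Q →* G) (hpq : ∀ c, p (φ₁ c) = q (φ₂ c))
    (x : Q) : amalgLift φ₁ φ₂ p q hpq (amalgInr φ₁ φ₂ x) = q x := by
  rfl

theorem splitsOver_of_amalg_data {C : Type v} [Group C] {P Q G : Type u}
    [Group P] [Group Q] [Group G]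
    (φ₁ : C →* P) (φ₂ : C →* Q)
    (hinj₁ : Function.Injective φ₁) (hinj₂ : Function.Injective φ₂)
    (hns₁ : ¬ Function.Surjective φ₁) (hns₂ : ¬ Function.Surjective φ₂)
    (p : P →* G) (q : Q →* G) (hpq : ∀ c, p (φ₁ c) = q (φ₂ c))
    (F : G →* AmalgamatedProduct φ₁ φ₂)
    (hFp : ∀ x, F (p x) = amalgInl φ₁ φ₂ x) (hFq : ∀ x, F (q x) = amalgInr φ₁ φ₂ x)
    (hGF : (amalgLift φ₁ φ₂ p q hpq).comp F = MonoidHom.id G) :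
    SplitsOver G C := by
  left
  refine ⟨⟨P, Q, φ₁, φ₂, hinj₁, hinj₂, hns₁, hns₂, ?_⟩⟩
  refine MonoidHom.toMulEquiv F (amalgLift φ₁ φ₂ p q hpq) hGF ?_
  have h1 : (F.comp (amalgLift φ₁ φ₂ p q hpq)).comp (amalgMk φ₁ φ₂)
      = (MonoidHom.id _).comp (amalgMk φ₁ φ₂) := by
    apply Monoid.Coprod.hom_ext
    · ext x
      exact (congrArg F (amalgLift_inl φ₁ φ₂ p q hpq x)).trans (hFp x)
    · ext x
      exact (congrArg F (amalgLift_inr φ₁ φ₂ p q hpq x)).trans (hFq x)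
  exact QuotientGroup.monoidHom_ext _ h1

end AmalgHelpers

section CaseComplete
open Multiplicative

theorem raag_hnn_complete {V : Type} [Fintype V] (Γ : SimpleGraph V) (n : ℕ)
    (hc : IsCompleteGraph Γ) (hcard : Fintype.card V = n + 1) :
    Nonempty (HNNSplitting (RAAG Γ) (FreeAb n)) := by
  classical
  obtain ⟨ι⟩ : Nonempty (Fin (n + 1) ≃ V) := by
    rw [← hcard]; exact ⟨(Fintype.equivFin V).symm⟩
  set φ0 : (⊤ : Subgroup (FreeAb n)) ≃* (⊤ : Subgroup (FreeAb n)) := MulEquiv.refl _ with hφ0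
  set H := HNNExtension (FreeAb n) ⊤ ⊤ φ0 with hH
  have key : ∀ x : FreeAb n, Commute (HNNExtension.t : H) (HNNExtension.of x) := by
    intro x
    have h1 := HNNExtension.t_mul_of (φ := φ0) ⟨x, trivial⟩
    exact h1
  have hfH : ∀ v : V, True := fun _ => trivial
  let fH : V → H := fun v =>
    if h : (ι.symm v : ℕ) < n then HNNExtension.of (fabBasis ⟨ι.symm v, h⟩)
    else HNNExtension.t
  have hcomm : ∀ u w, Γ.Adj u w → Commute (fH u) (fH w) := by
    intro u w _
    by_cases h1 : (ι.symm u : ℕ) < n <;> by_cases h2 : (ι.symm w : ℕ) < n <;>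
      simp only [fH, dif_pos, dif_neg, h1, h2, dite_true, dite_false]
    · exact (Commute.all _ _).map (HNNExtension.of)
    · exact (key _).symm
    · exact key _
    · exact Commute.refl _
  have hgen : ∀ i j : Fin n, Commute (RAAG.gen Γ (ι i.castSucc)) (RAAG.gen Γ (ι j.castSucc)) := by
    intro i j
    rcases eq_or_ne i j with rfl | hne
    · exact Commute.refl _
    · exact raag_gen_commute Γ (hc _ _
        (fun h => hne (Fin.castSucc_injective _ (ι.injective h))))
  let fK : FreeAb n →* RAAG Γ := freeAbHom (fun i => RAAG.gen Γ (ι i.castSucc)) hgen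
  let x : RAAG Γ := RAAG.gen Γ (ι (Fin.last n))
  have hx : ∀ y : FreeAb n, Commute x (fK y) := by
    intro y
    have hsub : Subgroup.closure (Set.range (fabBasis (n := n)))
        ≤ Subgroup.comap fK (Subgroup.centralizer {x}) := by
      rw [Subgroup.closure_le]
      rintro _ ⟨i, rfl⟩
      have : fK (fabBasis i) ∈ Subgroup.centralizer {x} := by
        rw [show fK (fabBasis i) = RAAG.gen Γ (ι i.castSucc) from freeAbHom_basis _ _ i]
        rw [Subgroup.mem_centralizer_iff]
        rintro h ⟨⟩
        exact (raag_gen_commute Γ (hc _ _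
          (fun hh => (Fin.castSucc_lt_last i).ne' (ι.injective hh)))).eq
      exact this
    rw [fab_closure, top_le_iff] at hsub
    have hy : fK y ∈ Subgroup.centralizer {x} := by
      have : y ∈ Subgroup.comap fK (Subgroup.centralizer {x}) := by
        rw [hsub]; trivial
      exact this
    rw [Subgroup.mem_centralizer_iff] at hy
    exact (hy x rfl)
  let Ψ : H →* RAAG Γ := HNNExtension.lift fK x (fun a => (hx ↑a).eq)
  let F : RAAG Γ →* H := raagHom Γ fH hcomm
  have hΨF : Ψ.comp F = MonoidHom.id _ := by
    apply raag_hom_ext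
    intro v
    simp only [MonoidHom.comp_apply, MonoidHom.id_apply]
    rw [show F (RAAG.gen Γ v) = fH v from raagHom_gen Γ fH hcomm v]
    by_cases h : (ι.symm v : ℕ) < n
    · simp only [fH, dif_pos h]
      rw [show Ψ (HNNExtension.of (fabBasis ⟨ι.symm v, h⟩)) = fK (fabBasis ⟨ι.symm v, h⟩)
        from HNNExtension.lift_of _ _ _ _]
      rw [show fK (fabBasis ⟨(ι.symm v : ℕ), h⟩) = RAAG.gen Γ (ι (Fin.castSucc ⟨ι.symm v, h⟩))
        from freeAbHom_basis _ _ _]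
      congr 1
      rw [show Fin.castSucc (⟨(ι.symm v : ℕ), h⟩ : Fin n) = ι.symm v from by ext; simp]
      exact ι.apply_symm_apply v
    · simp only [fH, dif_neg h]
      rw [show Ψ (HNNExtension.t) = x from HNNExtension.lift_t _ _ _]
      have hlast : Fin.last n = ι.symm v := by
        ext
        have := (ι.symm v).isLt
        simp only [Fin.val_last]
        omega
      show RAAG.gen Γ (ι (Fin.last n)) = RAAG.gen Γ v
      rw [hlast, ι.apply_symm_apply]
  have hFΨ : F.comp Ψ = MonoidHom.id H := by
    apply HNNExtension.hom_ext
    · apply fab_hom_ext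
      intro i
      simp only [MonoidHom.comp_apply]
      rw [show Ψ (HNNExtension.of (fabBasis i)) = fK (fabBasis i) from HNNExtension.lift_of _ _ _ _]
      rw [show fK (fabBasis i) = RAAG.gen Γ (ι i.castSucc) from freeAbHom_basis _ _ i]
      rw [show F (RAAG.gen Γ (ι i.castSucc)) = fH (ι i.castSucc) from raagHom_gen _ _ _ _]
      have h1 : ((ι.symm (ι i.castSucc)) : ℕ) < n := by
        rw [ι.symm_apply_apply]; exact i.isLt
      simp only [fH, dif_pos h1]
      rw [show (⟨((ι.symm (ι i.castSucc)) : ℕ), h1⟩ : Fin n) = i from Fin.ext (by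
        simp [ι.symm_apply_apply])]
      rfl
    · simp only [MonoidHom.comp_apply, MonoidHom.id_apply]
      rw [show Ψ (HNNExtension.t) = x from HNNExtension.lift_t _ _ _]
      rw [show F x = fH (ι (Fin.last n)) from raagHom_gen _ _ _ _]
      have h1 : ¬ ((ι.symm (ι (Fin.last n))) : ℕ) < n := by
        rw [ι.symm_apply_apply]; simp
      simp only [fH, dif_neg h1]
      rfl
  exact ⟨⟨FreeAb n, ⊤, ⊤, φ0, Subgroup.topEquiv.symm, MonoidHom.toMulEquiv F Ψ hΨF hFΨ⟩⟩

end CaseComplete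

section CaseCut
open Multiplicative

variable {V : Type} (Γ : SimpleGraph V)

/-- The `P`-side graph in the squaring case: vertices are `T` plus an extra vertex `z`
(`none`), joined to all vertices of the clique inside `T`. -/
def thetaGraph (T : Set V) (Λ : Set V) : SimpleGraph (Option ↥T) where
  Adj a b := match a, b with
    | some u, some w => Γ.Adj u w
    | none, some u => (u : V) ∈ Λ
    | some u, none => (u : V) ∈ Λ
    | none, none => False
  symm := by
    exact ⟨by rintro (_ | u) (_ | w) h <;> simp_all <;> exact h.symm⟩
  loopless := by
    exact ⟨by rintro (_ | u) h <;> simp_all⟩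

theorem raag_amalg_caseA {n : ℕ} (t : Finset V) (ht : Γ.IsClique ↑t)
    (hcard : t.card = n) (s : Set V) (hs : s ⊆ ↑t) (m : V) (hmt : m ∈ t) (hms : m ∉ s)
    (Y : Set V) (hYt : ∀ v ∈ Y, v ∉ t) (hYs : ∀ v ∈ Y, v ∉ s)
    (hYe : ∀ v ∈ Y, ∀ w, Γ.Adj v w → w ∈ Y ∨ w ∈ s)
    (y₀ : V) (hy₀ : y₀ ∈ Y) :
    SplitsOver (RAAG Γ) (FreeAb n) := by
  classical
  obtain ⟨ε⟩ : Nonempty (Fin n ≃ ↥t) := by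
    rw [← hcard]; exact ⟨(t.equivFin).symm⟩
  -- the two sides
  set T : Set V := Y ∪ {v | v ∈ t ∧ v ≠ m} with hT
  have hmT : m ∉ T := by
    rintro (h | ⟨_, h⟩)
    · exact hYt m h hmt
    · exact h rfl
  have hsT : ∀ v ∈ s, v ∈ T := fun v hv =>
    Or.inr ⟨hs hv, fun h => hms (h ▸ hv)⟩
  set S₂ : Set V := {v | v ∉ Y} with hS₂
  have htS₂ : ∀ v ∈ t, v ∈ S₂ := fun v hv h => hYt v h hv
  set Θ : SimpleGraph (Option ↥T) := thetaGraph Γ T ↑t with hΘ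
  set Ξ : SimpleGraph ↥S₂ := Γ.induce S₂ with hΞ
  -- clique adjacency helper
  have hadj : ∀ u v : ↥t, (u : V) ≠ v → Γ.Adj u v := fun u v huv => ht u.2 v.2 huv
  have htT : ∀ (u : ↥t), (u : V) ≠ m → (u : V) ∈ T := fun u h => Or.inr ⟨u.2, h⟩
  -- generators for φ₁ and φ₂
  set g₁ : Fin n → RAAG Θ := fun i =>
    if h : ((ε i : V) = m) then RAAG.gen Θ none
    else RAAG.gen Θ (some ⟨ε i, htT (ε i) h⟩) with hg₁
  set dd : Fin n → ℤ := fun i => if ((ε i : V) = m) then 2 else 1 with hdd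
  set g₂ : Fin n → RAAG Ξ := fun i =>
    (RAAG.gen Ξ ⟨ε i, htS₂ _ (ε i).2⟩) ^ (dd i) with hg₂
  have hΘadj : ∀ (a b : Option ↥T), Θ.Adj a b ↔ (thetaGraph Γ T ↑t).Adj a b := fun a b => Iff.rfl
  have hΘss : ∀ (a b : ↥T), Γ.Adj a b → Θ.Adj (some a) (some b) := fun a b h => h
  have hΘns : ∀ (a : ↥T), (a : V) ∈ t → Θ.Adj none (some a) := fun a h => Finset.mem_coe.mpr h
  have hg₁comm : ∀ i j, Commute (g₁ i) (g₁ j) := by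
    intro i j
    rcases eq_or_ne i j with rfl | hne
    · exact Commute.refl _
    have hij : (ε i : V) ≠ (ε j : V) := fun h =>
      hne (ε.injective (Subtype.coe_injective h))
    simp only [hg₁]
    by_cases h1 : (ε i : V) = m <;> by_cases h2 : (ε j : V) = m <;>
      simp only [h1, h2, dite_true, dite_false, dif_pos, dif_neg, not_false_iff]
    · exact absurd (h1.trans h2.symm) hij
    · exact raag_gen_commute Θ (hΘns _ (ε j).2)
    · exact (raag_gen_commute Θ (hΘns _ (ε i).2)).symm
    · exact raag_gen_commute Θ (hΘss _ _ (hadj _ _ hij))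
  have hΞadj : ∀ (a b : ↥S₂), Γ.Adj a b → Ξ.Adj a b := fun a b h => h
  have hg₂comm : ∀ i j, Commute (g₂ i) (g₂ j) := by
    intro i j
    rcases eq_or_ne i j with rfl | hne
    · exact Commute.refl _
    have hij : (ε i : V) ≠ (ε j : V) := fun h =>
      hne (ε.injective (Subtype.coe_injective h))
    simp only [hg₂]
    exact (raag_gen_commute Ξ (hΞadj _ _ (hadj _ _ hij))).zpow_zpow _ _
  set φ₁ : FreeAb n →* RAAG Θ := freeAbHom g₁ hg₁comm with hφ₁
  set φ₂ : FreeAb n →* RAAG Ξ := freeAbHom g₂ hg₂comm with hφ₂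
  -- the maps to RAAG Γ
  set fp : Option ↥T → RAAG Γ := fun a => match a with
    | some u => RAAG.gen Γ u
    | none => (RAAG.gen Γ m) ^ 2 with hfp
  have hfpcomm : ∀ a b, Θ.Adj a b → Commute (fp a) (fp b) := by
    rintro (_ | u) (_ | w) hab
    · exact (hab : False).elim
    · have hwm : (w : V) ≠ m := fun h => hmT (h ▸ w.2)
      have hcmw : Commute (RAAG.gen Γ m) (RAAG.gen Γ w) :=
        raag_gen_commute Γ (hadj ⟨m, hmt⟩ ⟨w, Finset.mem_coe.mp hab⟩ (Ne.symm hwm))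
      exact hcmw.pow_left 2
    · have hum : (u : V) ≠ m := fun h => hmT (h ▸ u.2)
      have hcum : Commute (RAAG.gen Γ u) (RAAG.gen Γ m) :=
        raag_gen_commute Γ (hadj ⟨u, Finset.mem_coe.mp hab⟩ ⟨m, hmt⟩ hum)
      exact hcum.pow_right 2
    · exact raag_gen_commute Γ hab
  set p : RAAG Θ →* RAAG Γ := raagHom Θ fp hfpcomm with hp
  set fq : ↥S₂ → RAAG Γ := fun u => RAAG.gen Γ u with hfq
  have hfqcomm : ∀ a b, Ξ.Adj a b → Commute (fq a) (fq b) := fun a b hab =>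
    raag_gen_commute Γ hab
  set q : RAAG Ξ →* RAAG Γ := raagHom Ξ fq hfqcomm with hq
  have hpg : ∀ a, p (RAAG.gen Θ a) = fp a := fun a => raagHom_gen Θ fp hfpcomm a
  have hqg : ∀ a, q (RAAG.gen Ξ a) = fq a := fun a => raagHom_gen Ξ fq hfqcomm a
  have hpq : ∀ c, p (φ₁ c) = q (φ₂ c) := by
    have : p.comp φ₁ = q.comp φ₂ := by
      apply fab_hom_ext
      intro i
      simp only [MonoidHom.comp_apply, hφ₁, hφ₂, freeAbHom_basis, hg₁, hg₂]
      by_cases h1 : (ε i : V) = m <;>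
        simp only [h1, dite_true, dite_false, if_pos, if_neg, dif_pos, dif_neg,
          not_false_iff, map_zpow, hdd, if_true, if_false]
      · rw [hpg, hqg]
        simp only [hfp, hfq, h1]
        rfl
      · rw [hpg, hqg]
        simp only [hfp, hfq]
        norm_num
    exact fun c => congrFun (congrArg (fun (h : _ →* _) => h.toFun) this) c
  -- bridge lemmas
  have hbr : ∀ (v : V) (h1 : v ∈ T) (h2 : v ∈ S₂) (hvt : v ∈ t) (hvm : v ≠ m),
      amalgInl φ₁ φ₂ (RAAG.gen Θ (some ⟨v, h1⟩)) = amalgInr φ₁ φ₂ (RAAG.gen Ξ ⟨v, h2⟩) := by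
    intro v h1 h2 hvt hvm
    set i0 : Fin n := ε.symm ⟨v, hvt⟩ with hi0
    have hεi : (ε i0 : V) = v := by rw [hi0, ε.apply_symm_apply]
    have hm' : ¬((ε i0 : V) = m) := fun h => hvm (hεi.symm.trans h)
    have h0 := amalg_comm φ₁ φ₂ (fabBasis i0)
    rw [hφ₁, hφ₂, freeAbHom_basis, freeAbHom_basis] at h0
    simp only [hg₁, hg₂, hdd, dif_neg hm', if_neg hm', zpow_one] at h0
    simp only [hεi] at h0
    exact h0
  have hbrm : amalgInl φ₁ φ₂ (RAAG.gen Θ none)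
      = amalgInr φ₁ φ₂ ((RAAG.gen Ξ ⟨m, htS₂ m hmt⟩) ^ (2:ℤ)) := by
    set i0 : Fin n := ε.symm ⟨m, hmt⟩ with hi0
    have hεi : (ε i0 : V) = m := by rw [hi0, ε.apply_symm_apply]
    have h0 := amalg_comm φ₁ φ₂ (fabBasis i0)
    rw [hφ₁, hφ₂, freeAbHom_basis, freeAbHom_basis] at h0
    simp only [hg₁, hg₂, hdd, dif_pos hεi, if_pos hεi] at h0
    simp only [hεi] at h0
    exact h0
  -- the map F
  have hS₂mem : ∀ v : V, v ∉ T → v ∈ S₂ := fun v h hY => h (Or.inl hY)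
  set fF : V → AmalgamatedProduct φ₁ φ₂ := fun v =>
    if h : v ∈ T then amalgInl φ₁ φ₂ (RAAG.gen Θ (some ⟨v, h⟩))
    else amalgInr φ₁ φ₂ (RAAG.gen Ξ ⟨v, hS₂mem v h⟩) with hfF
  have hTt : ∀ v, v ∈ T → v ∉ Y → (v ∈ t ∧ v ≠ m) := by
    rintro v (h | h) hvY
    · exact absurd h hvY
    · exact h
  have hcross : ∀ u w, Γ.Adj u w → u ∈ T → w ∉ T → (u ∈ S₂ ∧ u ∈ t ∧ u ≠ m) := by
    intro u w hadjuw huT hwT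
    have huY : u ∉ Y := by
      intro huY
      rcases hYe u huY w hadjuw with h | h
      · exact hwT (Or.inl h)
      · exact hwT (hsT w h)
    obtain ⟨hut, hum⟩ := hTt u huT huY
    exact ⟨huY, hut, hum⟩
  have hFcomm : ∀ u w, Γ.Adj u w → Commute (fF u) (fF w) := by
    intro u w hadjuw
    by_cases hu : u ∈ T <;> by_cases hw : w ∈ T <;>
      simp only [hfF, dif_pos, dif_neg, hu, hw, dite_true, dite_false]
    · exact (raag_gen_commute Θ (hΘss ⟨u, hu⟩ ⟨w, hw⟩ hadjuw)).map (amalgInl φ₁ φ₂)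
    · -- u ∈ T, w ∉ T
      obtain ⟨huS, hut, hum⟩ := hcross u w hadjuw hu hw
      rw [hbr u hu huS hut hum]
      exact (raag_gen_commute Ξ (hΞadj ⟨u, huS⟩ ⟨w, hS₂mem w hw⟩ hadjuw)).map (amalgInr φ₁ φ₂)
    · -- u ∉ T, w ∈ T
      obtain ⟨hwS, hwt, hwm⟩ := hcross w u hadjuw.symm hw hu
      rw [hbr w hw hwS hwt hwm]
      exact (raag_gen_commute Ξ (hΞadj ⟨u, hS₂mem u hu⟩ ⟨w, hwS⟩ hadjuw)).map (amalgInr φ₁ φ₂)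
    · exact (raag_gen_commute Ξ (hΞadj ⟨u, hS₂mem u hu⟩ ⟨w, hS₂mem w hw⟩ hadjuw)).map
        (amalgInr φ₁ φ₂)
  set F : RAAG Γ →* AmalgamatedProduct φ₁ φ₂ := raagHom Γ fF hFcomm with hF
  have hFg : ∀ v, F (RAAG.gen Γ v) = fF v := fun v => raagHom_gen Γ fF hFcomm v
  have hmS₂ : m ∈ S₂ := htS₂ m hmt
  -- F ∘ p = inl
  have hFp : ∀ x, F (p x) = amalgInl φ₁ φ₂ x := by
    have hcomp : F.comp p = amalgInl φ₁ φ₂ := by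
      apply raag_hom_ext
      rintro (_ | u)
      · -- none
        simp only [MonoidHom.comp_apply, hpg]
        simp only [hfp]
        rw [map_pow]
        simp only [hFg, hfF]
        rw [dif_neg hmT, ← map_pow, show (RAAG.gen Ξ ⟨m, hS₂mem m hmT⟩) ^ (2:ℕ)
          = (RAAG.gen Ξ ⟨m, htS₂ m hmt⟩) ^ (2:ℤ) from by norm_cast, ← hbrm]
      · simp only [MonoidHom.comp_apply, hpg]
        simp only [hfp, hFg, hfF]
        rw [dif_pos u.2]
    exact fun x => DFunLike.congr_fun hcomp x
  have hFq : ∀ x, F (q x) = amalgInr φ₁ φ₂ x := by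
    have hcomp : F.comp q = amalgInr φ₁ φ₂ := by
      apply raag_hom_ext
      intro u
      simp only [MonoidHom.comp_apply, hqg]
      simp only [hfq, hFg, hfF]
      by_cases h : (u : V) ∈ T
      · rw [dif_pos h]
        obtain ⟨hut, hum⟩ := hTt u h u.2
        rw [hbr u h u.2 hut hum]
      · rw [dif_neg h]
    exact fun x => DFunLike.congr_fun hcomp x
  have hGF : (amalgLift φ₁ φ₂ p q hpq).comp F = MonoidHom.id (RAAG Γ) := by
    apply raag_hom_ext
    intro v
    simp only [MonoidHom.comp_apply, MonoidHom.id_apply, hFg, hfF]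
    by_cases h : v ∈ T
    · rw [dif_pos h, amalgLift_inl, hpg]
    · rw [dif_neg h, amalgLift_inr, hqg]
  -- injectivity of φ₁
  set fr₁ : Option ↥T → FreeAb n := fun a => match a with
    | some u => if h : (u : V) ∈ t then fabBasis (ε.symm ⟨(u : V), h⟩) else (1 : FreeAb n)
    | none => fabBasis (ε.symm ⟨m, hmt⟩) with hfr₁
  set r₁ : RAAG Θ →* FreeAb n := raagHom Θ fr₁ (fun _ _ _ => Commute.all _ _) with hr₁
  have hr₁g : ∀ a, r₁ (RAAG.gen Θ a) = fr₁ a := fun a => raagHom_gen Θ fr₁ _ a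
  have hinj₁ : Function.Injective φ₁ := by
    apply freeAbHom_injective φ₁ r₁ (fun _ => (1:ℤ)) (fun _ => one_ne_zero)
    intro i
    rw [zpow_one, hφ₁, freeAbHom_basis]
    simp only [hg₁]
    by_cases h1 : (ε i : V) = m
    · rw [dif_pos h1, hr₁g]
      simp only [hfr₁]
      rw [show (⟨m, hmt⟩ : ↥t) = ε i from Subtype.ext h1.symm, ε.symm_apply_apply]
    · rw [dif_neg h1, hr₁g]
      simp only [hfr₁]
      rw [dif_pos (ε i).2]
      rw [show (⟨((ε i : ↥t) : V), (ε i).2⟩ : ↥t) = ε i from Subtype.ext rfl,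
        ε.symm_apply_apply]
  -- injectivity of φ₂
  set fr₂ : ↥S₂ → FreeAb n := fun u =>
    if h : (u : V) ∈ t then fabBasis (ε.symm ⟨(u : V), h⟩) else (1 : FreeAb n) with hfr₂
  set r₂ : RAAG Ξ →* FreeAb n := raagHom Ξ fr₂ (fun _ _ _ => Commute.all _ _) with hr₂
  have hr₂g : ∀ a, r₂ (RAAG.gen Ξ a) = fr₂ a := fun a => raagHom_gen Ξ fr₂ _ a
  have hinj₂ : Function.Injective φ₂ := by
    apply freeAbHom_injective φ₂ r₂ dd (by
      intro i
      simp only [hdd]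
      split <;> norm_num)
    intro i
    rw [hφ₂, freeAbHom_basis]
    simp only [hg₂]
    rw [map_zpow, hr₂g]
    simp only [hfr₂]
    rw [dif_pos (ε i).2]
    rw [show (⟨((ε i : ↥t) : V), (ε i).2⟩ : ↥t) = ε i from Subtype.ext rfl,
      ε.symm_apply_apply]
  -- non-surjectivity of φ₁
  have hns₁ : ¬ Function.Surjective φ₁ := by
    intro hsurj
    set fχ : Option ↥T → Multiplicative ℤ := fun a => match a with
      | some u => if (u : V) = y₀ then ofAdd (1:ℤ) else 1
      | none => 1 with hfχ
    set χ : RAAG Θ →* Multiplicative ℤ := raagHom Θ fχ (fun _ _ _ => Commute.all _ _) with hχ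
    have hχg : ∀ a, χ (RAAG.gen Θ a) = fχ a := fun a => raagHom_gen Θ fχ _ a
    have hχφ : ∀ c, χ (φ₁ c) = 1 := by
      have hcomp : χ.comp φ₁ = 1 := by
        apply fab_hom_ext
        intro i
        rw [MonoidHom.comp_apply, hφ₁, freeAbHom_basis]
        simp only [hg₁]
        by_cases h1 : (ε i : V) = m
        · rw [dif_pos h1, hχg]
          rfl
        · rw [dif_neg h1, hχg]
          simp only [hfχ]
          rw [if_neg (show ¬((ε i : V) = y₀) from fun h => hYt y₀ hy₀ (by rw [← h]; exact (ε i).2))]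
          rfl
      exact fun c => DFunLike.congr_fun hcomp c
    obtain ⟨c, hc⟩ := hsurj (RAAG.gen Θ (some ⟨y₀, Or.inl hy₀⟩))
    have h2 := hχφ c
    rw [hc, hχg] at h2
    simp only [hfχ, if_pos rfl] at h2
    exact one_ne_zero (ofAdd.injective h2)
  -- non-surjectivity of φ₂
  have hns₂ : ¬ Function.Surjective φ₂ := by
    intro hsurj
    set fχ : ↥S₂ → Multiplicative ℤ := fun u =>
      if (u : V) = m then ofAdd (1:ℤ) else 1 with hfχ
    set χ : RAAG Ξ →* Multiplicative ℤ := raagHom Ξ fχ (fun _ _ _ => Commute.all _ _) with hχ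
    have hχg : ∀ a, χ (RAAG.gen Ξ a) = fχ a := fun a => raagHom_gen Ξ fχ _ a
    have hχφ : ∀ c, χ (φ₂ c) ∈ Subgroup.zpowers (ofAdd (2:ℤ)) := by
      intro c
      have hsub : Subgroup.closure (Set.range (fabBasis (n := n)))
          ≤ Subgroup.comap (χ.comp φ₂) (Subgroup.zpowers (ofAdd (2:ℤ))) := by
        rw [Subgroup.closure_le]
        rintro _ ⟨i, rfl⟩
        have : (χ.comp φ₂) (fabBasis i) ∈ Subgroup.zpowers (ofAdd (2:ℤ)) := by
          rw [MonoidHom.comp_apply, hφ₂, freeAbHom_basis]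
          simp only [hg₂]
          rw [map_zpow, hχg]
          simp only [hfχ, hdd]
          by_cases h1 : (ε i : V) = m
          · rw [if_pos h1, if_pos h1]
            rw [show (ofAdd (1:ℤ)) ^ (2:ℤ) = ofAdd (2:ℤ) from rfl]
            exact Subgroup.mem_zpowers _
          · rw [if_neg h1]
            simp only [one_zpow]
            exact one_mem _
        exact this
      rw [fab_closure, top_le_iff] at hsub
      have : c ∈ Subgroup.comap (χ.comp φ₂) (Subgroup.zpowers (ofAdd (2:ℤ))) := by
        rw [hsub]; trivial
      exact this
    obtain ⟨c, hc⟩ := hsurj (RAAG.gen Ξ ⟨m, hmS₂⟩)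
    have h2 := hχφ c
    rw [hc, hχg] at h2
    simp only [hfχ, if_pos rfl] at h2
    obtain ⟨k, hk⟩ := h2
    have h3 : k • (2:ℤ) = 1 := by
      have := congrArg toAdd hk
      simpa using this
    simp only [smul_eq_mul] at h3
    omega
  exact splitsOver_of_amalg_data φ₁ φ₂ hinj₁ hinj₂ hns₁ hns₂ p q hpq F hFp hFq hGF



theorem raag_amalg_caseB {n : ℕ} (t : Finset V) (ht : Γ.IsClique ↑t)
    (hcard : t.card = n)
    (Y : Set V) (hYt : ∀ v ∈ Y, v ∉ t)
    (hYe : ∀ v ∈ Y, ∀ w, Γ.Adj v w → w ∈ Y ∨ w ∈ t)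
    (y₀ : V) (hy₀ : y₀ ∈ Y) (x₀ : V) (hx₀Y : x₀ ∉ Y) (hx₀t : x₀ ∉ t) :
    SplitsOver (RAAG Γ) (FreeAb n) := by
  classical
  obtain ⟨ε⟩ : Nonempty (Fin n ≃ ↥t) := by
    rw [← hcard]; exact ⟨(t.equivFin).symm⟩
  set T : Set V := Y ∪ {v | v ∈ t} with hT
  set S₂ : Set V := {v | v ∉ Y} with hS₂
  have htT : ∀ v ∈ t, v ∈ T := fun v hv => Or.inr hv
  have htS₂ : ∀ v ∈ t, v ∈ S₂ := fun v hv h => hYt v h hv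
  set Θ : SimpleGraph ↥T := Γ.induce T with hΘ
  set Ξ : SimpleGraph ↥S₂ := Γ.induce S₂ with hΞ
  have hadj : ∀ u v : ↥t, (u : V) ≠ v → Γ.Adj u v := fun u v huv => ht u.2 v.2 huv
  have hΘa : ∀ (a b : ↥T), Γ.Adj a b → Θ.Adj a b := fun a b h => h
  have hΞa : ∀ (a b : ↥S₂), Γ.Adj a b → Ξ.Adj a b := fun a b h => h
  set g₁ : Fin n → RAAG Θ := fun i => RAAG.gen Θ ⟨ε i, htT _ (ε i).2⟩ with hg₁
  set g₂ : Fin n → RAAG Ξ := fun i => RAAG.gen Ξ ⟨ε i, htS₂ _ (ε i).2⟩ with hg₂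
  have hij : ∀ i j : Fin n, i ≠ j → (ε i : V) ≠ (ε j : V) := fun i j hne h =>
    hne (ε.injective (Subtype.coe_injective h))
  have hg₁comm : ∀ i j, Commute (g₁ i) (g₁ j) := by
    intro i j
    rcases eq_or_ne i j with rfl | hne
    · exact Commute.refl _
    · exact raag_gen_commute Θ (hΘa _ _ (hadj _ _ (hij i j hne)))
  have hg₂comm : ∀ i j, Commute (g₂ i) (g₂ j) := by
    intro i j
    rcases eq_or_ne i j with rfl | hne
    · exact Commute.refl _
    · exact raag_gen_commute Ξ (hΞa _ _ (hadj _ _ (hij i j hne)))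
  set φ₁ : FreeAb n →* RAAG Θ := freeAbHom g₁ hg₁comm with hφ₁
  set φ₂ : FreeAb n →* RAAG Ξ := freeAbHom g₂ hg₂comm with hφ₂
  set fp : ↥T → RAAG Γ := fun u => RAAG.gen Γ u with hfp
  set fq : ↥S₂ → RAAG Γ := fun u => RAAG.gen Γ u with hfq
  set p : RAAG Θ →* RAAG Γ := raagHom Θ fp (fun a b hab => raag_gen_commute Γ hab) with hp
  set q : RAAG Ξ →* RAAG Γ := raagHom Ξ fq (fun a b hab => raag_gen_commute Γ hab) with hq
  have hpg : ∀ a, p (RAAG.gen Θ a) = fp a := fun a => raagHom_gen Θ fp _ a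
  have hqg : ∀ a, q (RAAG.gen Ξ a) = fq a := fun a => raagHom_gen Ξ fq _ a
  have hpq : ∀ c, p (φ₁ c) = q (φ₂ c) := by
    have hcomp : p.comp φ₁ = q.comp φ₂ := by
      apply fab_hom_ext
      intro i
      simp only [MonoidHom.comp_apply, hφ₁, hφ₂, freeAbHom_basis, hg₁, hg₂, hpg, hqg]
      rfl
    exact fun c => DFunLike.congr_fun hcomp c
  have hbr : ∀ (v : V) (h1 : v ∈ T) (h2 : v ∈ S₂), v ∈ t →
      amalgInl φ₁ φ₂ (RAAG.gen Θ ⟨v, h1⟩) = amalgInr φ₁ φ₂ (RAAG.gen Ξ ⟨v, h2⟩) := by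
    intro v h1 h2 hvt
    set i0 : Fin n := ε.symm ⟨v, hvt⟩ with hi0
    have hεi : (ε i0 : V) = v := by rw [hi0, ε.apply_symm_apply]
    have h0 := amalg_comm φ₁ φ₂ (fabBasis i0)
    rw [hφ₁, hφ₂, freeAbHom_basis, freeAbHom_basis] at h0
    simp only [hg₁, hg₂, hεi] at h0
    exact h0
  have hS₂mem : ∀ v : V, v ∉ T → v ∈ S₂ := fun v h hY => h (Or.inl hY)
  set fF : V → AmalgamatedProduct φ₁ φ₂ := fun v =>
    if h : v ∈ T then amalgInl φ₁ φ₂ (RAAG.gen Θ ⟨v, h⟩)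
    else amalgInr φ₁ φ₂ (RAAG.gen Ξ ⟨v, hS₂mem v h⟩) with hfF
  have hTt : ∀ v, v ∈ T → v ∉ Y → v ∈ t := by
    rintro v (h | h) hvY
    · exact absurd h hvY
    · exact h
  have hcross : ∀ u w, Γ.Adj u w → u ∈ T → w ∉ T → (u ∈ S₂ ∧ u ∈ t) := by
    intro u w hadjuw huT hwT
    have huY : u ∉ Y := by
      intro huY
      rcases hYe u huY w hadjuw with h | h
      · exact hwT (Or.inl h)
      · exact hwT (htT w h)
    exact ⟨huY, hTt u huT huY⟩
  have hFcomm : ∀ u w, Γ.Adj u w → Commute (fF u) (fF w) := by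
    intro u w hadjuw
    by_cases hu : u ∈ T <;> by_cases hw : w ∈ T <;>
      simp only [hfF, dif_pos, dif_neg, hu, hw, dite_true, dite_false]
    · exact (raag_gen_commute Θ (hΘa ⟨u, hu⟩ ⟨w, hw⟩ hadjuw)).map (amalgInl φ₁ φ₂)
    · obtain ⟨huS, hut⟩ := hcross u w hadjuw hu hw
      rw [hbr u hu huS hut]
      exact (raag_gen_commute Ξ (hΞa ⟨u, huS⟩ ⟨w, hS₂mem w hw⟩ hadjuw)).map (amalgInr φ₁ φ₂)
    · obtain ⟨hwS, hwt⟩ := hcross w u hadjuw.symm hw hu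
      rw [hbr w hw hwS hwt]
      exact (raag_gen_commute Ξ (hΞa ⟨u, hS₂mem u hu⟩ ⟨w, hwS⟩ hadjuw)).map (amalgInr φ₁ φ₂)
    · exact (raag_gen_commute Ξ (hΞa ⟨u, hS₂mem u hu⟩ ⟨w, hS₂mem w hw⟩ hadjuw)).map
        (amalgInr φ₁ φ₂)
  set F : RAAG Γ →* AmalgamatedProduct φ₁ φ₂ := raagHom Γ fF hFcomm with hF
  have hFg : ∀ v, F (RAAG.gen Γ v) = fF v := fun v => raagHom_gen Γ fF hFcomm v
  have hFp : ∀ x, F (p x) = amalgInl φ₁ φ₂ x := by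
    have hcomp : F.comp p = amalgInl φ₁ φ₂ := by
      apply raag_hom_ext
      intro u
      simp only [MonoidHom.comp_apply, hpg]
      simp only [hfp, hFg, hfF]
      rw [dif_pos u.2]
    exact fun x => DFunLike.congr_fun hcomp x
  have hFq : ∀ x, F (q x) = amalgInr φ₁ φ₂ x := by
    have hcomp : F.comp q = amalgInr φ₁ φ₂ := by
      apply raag_hom_ext
      intro u
      simp only [MonoidHom.comp_apply, hqg]
      simp only [hfq, hFg, hfF]
      by_cases h : (u : V) ∈ T
      · rw [dif_pos h]
        exact hbr u h u.2 (hTt u h u.2)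
      · rw [dif_neg h]
    exact fun x => DFunLike.congr_fun hcomp x
  have hGF : (amalgLift φ₁ φ₂ p q hpq).comp F = MonoidHom.id (RAAG Γ) := by
    apply raag_hom_ext
    intro v
    simp only [MonoidHom.comp_apply, MonoidHom.id_apply, hFg, hfF]
    by_cases h : v ∈ T
    · rw [dif_pos h, amalgLift_inl, hpg]
    · rw [dif_neg h, amalgLift_inr, hqg]
  set fr₁ : ↥T → FreeAb n := fun u =>
    if h : (u : V) ∈ t then fabBasis (ε.symm ⟨(u : V), h⟩) else (1 : FreeAb n) with hfr₁
  set r₁ : RAAG Θ →* FreeAb n := raagHom Θ fr₁ (fun _ _ _ => Commute.all _ _) with hr₁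
  have hr₁g : ∀ a, r₁ (RAAG.gen Θ a) = fr₁ a := fun a => raagHom_gen Θ fr₁ _ a
  have hinj₁ : Function.Injective φ₁ := by
    apply freeAbHom_injective φ₁ r₁ (fun _ => (1:ℤ)) (fun _ => one_ne_zero)
    intro i
    rw [zpow_one, hφ₁, freeAbHom_basis]
    simp only [hg₁, hr₁g]
    simp only [hfr₁]
    rw [dif_pos (ε i).2]
    rw [show (⟨((ε i : ↥t) : V), (ε i).2⟩ : ↥t) = ε i from Subtype.ext rfl,
      ε.symm_apply_apply]
  set fr₂ : ↥S₂ → FreeAb n := fun u =>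
    if h : (u : V) ∈ t then fabBasis (ε.symm ⟨(u : V), h⟩) else (1 : FreeAb n) with hfr₂
  set r₂ : RAAG Ξ →* FreeAb n := raagHom Ξ fr₂ (fun _ _ _ => Commute.all _ _) with hr₂
  have hr₂g : ∀ a, r₂ (RAAG.gen Ξ a) = fr₂ a := fun a => raagHom_gen Ξ fr₂ _ a
  have hinj₂ : Function.Injective φ₂ := by
    apply freeAbHom_injective φ₂ r₂ (fun _ => (1:ℤ)) (fun _ => one_ne_zero)
    intro i
    rw [zpow_one, hφ₂, freeAbHom_basis]
    simp only [hg₂, hr₂g]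
    simp only [hfr₂]
    rw [dif_pos (ε i).2]
    rw [show (⟨((ε i : ↥t) : V), (ε i).2⟩ : ↥t) = ε i from Subtype.ext rfl,
      ε.symm_apply_apply]
  have hns₁ : ¬ Function.Surjective φ₁ := by
    intro hsurj
    set fχ : ↥T → Multiplicative ℤ := fun u =>
      if (u : V) = y₀ then Multiplicative.ofAdd (1:ℤ) else 1 with hfχ
    set χ : RAAG Θ →* Multiplicative ℤ := raagHom Θ fχ (fun _ _ _ => Commute.all _ _) with hχ
    have hχg : ∀ a, χ (RAAG.gen Θ a) = fχ a := fun a => raagHom_gen Θ fχ _ a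
    have hχφ : ∀ c, χ (φ₁ c) = 1 := by
      have hcomp : χ.comp φ₁ = 1 := by
        apply fab_hom_ext
        intro i
        rw [MonoidHom.comp_apply, hφ₁, freeAbHom_basis]
        simp only [hg₁, hχg]
        simp only [hfχ]
        rw [if_neg (show ¬((ε i : V) = y₀) from fun h =>
          hYt y₀ hy₀ (by rw [← h]; exact (ε i).2))]
        rfl
      exact fun c => DFunLike.congr_fun hcomp c
    obtain ⟨c, hc⟩ := hsurj (RAAG.gen Θ ⟨y₀, Or.inl hy₀⟩)
    have h2 := hχφ c
    rw [hc, hχg] at h2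
    simp only [hfχ, if_pos rfl] at h2
    exact one_ne_zero (Multiplicative.ofAdd.injective h2)
  have hns₂ : ¬ Function.Surjective φ₂ := by
    intro hsurj
    set fχ : ↥S₂ → Multiplicative ℤ := fun u =>
      if (u : V) = x₀ then Multiplicative.ofAdd (1:ℤ) else 1 with hfχ
    set χ : RAAG Ξ →* Multiplicative ℤ := raagHom Ξ fχ (fun _ _ _ => Commute.all _ _) with hχ
    have hχg : ∀ a, χ (RAAG.gen Ξ a) = fχ a := fun a => raagHom_gen Ξ fχ _ a
    have hχφ : ∀ c, χ (φ₂ c) = 1 := by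
      have hcomp : χ.comp φ₂ = 1 := by
        apply fab_hom_ext
        intro i
        rw [MonoidHom.comp_apply, hφ₂, freeAbHom_basis]
        simp only [hg₂, hχg]
        simp only [hfχ]
        rw [if_neg (show ¬((ε i : V) = x₀) from fun h =>
          hx₀t (by rw [← h]; exact (ε i).2))]
        rfl
      exact fun c => DFunLike.congr_fun hcomp c
    obtain ⟨c, hc⟩ := hsurj (RAAG.gen Ξ ⟨x₀, hx₀Y⟩)
    have h2 := hχφ c
    rw [hc, hχg] at h2
    simp only [hfχ, if_pos rfl] at h2
    exact one_ne_zero (Multiplicative.ofAdd.injective h2)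
  exact splitsOver_of_amalg_data φ₁ φ₂ hinj₁ hinj₂ hns₁ hns₂ p q hpq F hFp hFq hGF

end CaseCut

section Glue

variable {V : Type} (Γ : SimpleGraph V)

def compSet (s : Set V) (c : ↥{v : V | v ∉ s}) : Set V :=
  {v | ∃ h : v ∉ s, (Γ.induce {v : V | v ∉ s}).Reachable c ⟨v, h⟩}

lemma compSet_self (s : Set V) (c : ↥{v : V | v ∉ s}) : (c : V) ∈ compSet Γ s c :=
  ⟨c.2, SimpleGraph.Reachable.refl _⟩

lemma compSet_not_s (s : Set V) (c : ↥{v : V | v ∉ s}) {v : V}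
    (h : v ∈ compSet Γ s c) : v ∉ s := h.1

lemma compSet_adj (s : Set V) (c : ↥{v : V | v ∉ s}) {v w : V}
    (h : v ∈ compSet Γ s c) (hadj : Γ.Adj v w) : w ∈ compSet Γ s c ∨ w ∈ s := by
  by_cases hw : w ∈ s
  · exact Or.inr hw
  · left
    obtain ⟨hv, hr⟩ := h
    exact ⟨hw, hr.trans (SimpleGraph.Adj.reachable (by exact hadj))⟩

lemma compSet_reach (s : Set V) (c : ↥{v : V | v ∉ s}) {v : V} (hv : v ∉ s)
    (h : v ∈ compSet Γ s c) : (Γ.induce {v : V | v ∉ s}).Reachable c ⟨v, hv⟩ := by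
  obtain ⟨hv', hr⟩ := h
  exact hr

theorem raag_splits_of_cut {n : ℕ} (t : Finset V) (ht : Γ.IsClique ↑t) (hcard : t.card = n)
    (s : Set V) (hs : s ⊆ ↑t) (hsep : SeparatesGraph Γ s) :
    SplitsOver (RAAG Γ) (FreeAb n) := by
  classical
  rw [SeparatesGraph, SimpleGraph.Preconnected] at hsep
  push_neg at hsep
  obtain ⟨a, b, hnr⟩ := hsep
  by_cases hts : ∀ v ∈ t, v ∈ s
  · -- case B : s = ↑t
    refine raag_amalg_caseB Γ t ht hcard (compSet Γ s a)
      (fun v hv hvt => (compSet_not_s Γ s a hv) (hts v hvt))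
      (fun v hv w hw => by
        rcases compSet_adj Γ s a hv hw with h | h
        · exact Or.inl h
        · exact Or.inr (hs h))
      a (compSet_self Γ s a) b ?_ ?_
    · intro hb
      exact hnr (compSet_reach Γ s a b.2 hb)
    · intro hbt
      exact b.2 (hts _ hbt)
  · -- case A : some m ∈ t \ s
    push_neg at hts
    obtain ⟨m, hmt, hms⟩ := hts
    set m' : ↥{v : V | v ∉ s} := ⟨m, hms⟩ with hm'
    -- choose the far point y
    obtain ⟨y, hy⟩ : ∃ y : ↥{v : V | v ∉ s}, ¬ (Γ.induce {v : V | v ∉ s}).Reachable m' y := by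
      by_cases hra : (Γ.induce {v : V | v ∉ s}).Reachable m' a
      · exact ⟨b, fun hrb => hnr (hra.symm.trans hrb)⟩
      · exact ⟨a, hra⟩
    refine raag_amalg_caseA Γ t ht hcard s hs m hmt hms (compSet Γ s y) ?_
      (fun v hv => compSet_not_s Γ s y hv)
      (fun v hv w hw => compSet_adj Γ s y hv hw)
      y (compSet_self Γ s y)
    -- hYt : ∀ v ∈ compSet, v ∉ t
    intro v hv hvt
    have hvs : v ∉ s := compSet_not_s Γ s y hv
    have hrm : (Γ.induce {v : V | v ∉ s}).Reachable m' ⟨v, hvs⟩ := by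
      rcases eq_or_ne m v with rfl | hne
      · exact SimpleGraph.Reachable.refl _
      · exact SimpleGraph.Adj.reachable (by exact ht hmt hvt hne)
    exact hy (hrm.trans (compSet_reach Γ s y hvs hv).symm)

end Glue

/-- If the finite simple graph `Γ` is a complete graph with `n+1`
vertices, or contains a complete subgraph `Λ` of size `n` together with a subgraph
`Λ₀ ⊆ Λ` whose removal disconnects `Γ`, then `A(Γ)` splits non-trivially over a subgroup
isomorphic to `ℤ^n`. -/
theorem raag_splits_over_Zn_of_cliqueCutCondition {V : Type} [Fintype V]
    (Γ : SimpleGraph V) (n : ℕ) (h : CliqueCutCondition Γ n) :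
    SplitsOver (RAAG Γ) (FreeAb n) := by
  rcases h with ⟨hc, hcard⟩ | ⟨t, ht, s, hs, hsep⟩
  · exact Or.inr (raag_hnn_complete Γ n hc hcard)
  · exact raag_splits_of_cut Γ t ht.1 ht.2 s hs hsep
end CoarseGraph
end

section
/- Let Γ be a finite simple graph and Λ ≤ Γ an induced subgraph. The commensurator of the subgroup ⟨Λ⟩ in the right-angled Artin group A(Γ) coincides with the normaliser of ⟨Λ⟩ in A(Γ), and both equal ⟨star(Λ)⟩, the subgroup generated by the vertices of the star of Λ. -/
/-! ## Coarse geometry of graphs -/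

section CoarseGraph

variable {W : Type*}

/-! ### Auxiliary development for Statement 6 -/

noncomputable section
open Classical

namespace RAAGAux

variable {V : Type*} {Γ : SimpleGraph V}

theorem gen_commute {u v : V} (h : Γ.Adj u v) : Commute (RAAG.gen Γ u) (RAAG.gen Γ v) := by
  rw [← commutatorElement_eq_one_iff_commute]
  have h1 : (PresentedGroup.mk (raagRels Γ)
      (FreeGroup.of u * FreeGroup.of v * (FreeGroup.of u)⁻¹ * (FreeGroup.of v)⁻¹)) = 1 := by
    apply (QuotientGroup.eq_one_iff _).2
    exact Subgroup.subset_normalClosure ⟨u, v, h, rfl⟩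
  rw [commutatorElement_def]; exact h1

/-- Build a hom out of a RAAG from vertex images that commute along edges. -/
def raagHom {G : Type*} [Group G] (f : V → G)
    (hf : ∀ u v : V, Γ.Adj u v → Commute (f u) (f v)) : RAAG Γ →* G :=
  PresentedGroup.toGroup (f := f) (by
    rintro r ⟨u, v, huv, rfl⟩
    simp only [map_mul, map_inv, FreeGroup.lift_apply_of]
    rw [show f u * f v * (f u)⁻¹ * (f v)⁻¹ = @Bracket.bracket G G commutatorElement (f u) (f v) from rfl,
      commutatorElement_eq_one_iff_commute]
    exact hf u v huv)

@[simp] theorem raagHom_gen {G : Type*} [Group G] (f : V → G)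
    (hf : ∀ u v : V, Γ.Adj u v → Commute (f u) (f v)) (v : V) :
    raagHom f hf (RAAG.gen Γ v) = f v :=
  PresentedGroup.toGroup.of _

theorem hom_ext {G : Type*} [Group G] {φ ψ : RAAG Γ →* G}
    (h : ∀ v, φ (RAAG.gen Γ v) = ψ (RAAG.gen Γ v)) : φ = ψ :=
  PresentedGroup.ext h

/-- exponent-sum homomorphism at a vertex -/
def expHom (Γ : SimpleGraph V) (v : V) : RAAG Γ →* Multiplicative ℤ :=
  raagHom (fun u => if u = v then Multiplicative.ofAdd 1 else 1)
    (fun _ _ _ => Commute.all _ _)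

theorem expHom_gen_self (v : V) : expHom Γ v (RAAG.gen Γ v) = Multiplicative.ofAdd 1 := by
  simp [expHom]

theorem gen_zpow_ne_one (v : V) {n : ℤ} (hn : n ≠ 0) : (RAAG.gen Γ v) ^ n ≠ 1 := by
  intro h
  have h2 : expHom Γ v ((RAAG.gen Γ v) ^ n) = Multiplicative.ofAdd n := by
    rw [map_zpow, expHom_gen_self, ← ofAdd_zsmul, smul_eq_mul, mul_one]
  rw [h, map_one] at h2
  exact hn (by simpa using h2.symm)

theorem orderOf_gen (v : V) : orderOf (RAAG.gen Γ v) = 0 := by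
  rw [orderOf_eq_zero_iff']
  intro n hn h
  exact gen_zpow_ne_one v (n := (n : ℤ)) (by exact_mod_cast hn.ne') (by rw [zpow_natCast]; exact h)

/-- The retraction killing generators outside `S`. -/
def retr (Γ : SimpleGraph V) (S : Set V) : RAAG Γ →* RAAG Γ :=
  raagHom (fun u => if u ∈ S then RAAG.gen Γ u else 1) (by
    intro u v huv
    by_cases hu : u ∈ S <;> by_cases hv : v ∈ S <;>
      simp [hu, hv, Commute.one_left, Commute.one_right, gen_commute huv])

@[simp] theorem retr_gen (S : Set V) (v : V) :
    retr Γ S (RAAG.gen Γ v) = if v ∈ S then RAAG.gen Γ v else 1 := by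
  simp [retr]

theorem gen_mem_vertexSubgroup {S : Set V} {v : V} (hv : v ∈ S) :
    RAAG.gen Γ v ∈ vertexSubgroup Γ S :=
  Subgroup.subset_closure ⟨v, hv, rfl⟩

theorem retr_mem (S : Set V) (x : RAAG Γ) : retr Γ S x ∈ vertexSubgroup Γ S := by
  have : x ∈ (vertexSubgroup Γ S).comap (retr Γ S) := by
    apply PresentedGroup.generated_by
    intro j
    simp only [Subgroup.mem_comap]
    rw [show (PresentedGroup.of j : RAAG Γ) = RAAG.gen Γ j from rfl, retr_gen]
    split
    · exact gen_mem_vertexSubgroup ‹_›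
    · exact one_mem _
  exact this

theorem retr_fixed {S : Set V} {x : RAAG Γ} (hx : x ∈ vertexSubgroup Γ S) :
    retr Γ S x = x := by
  induction hx using Subgroup.closure_induction with
  | mem y hy => rcases hy with ⟨v, hv, rfl⟩; simp [hv]
  | one => simp
  | mul a b _ _ ha hb => rw [map_mul, ha, hb]
  | inv a _ ha => rw [map_inv, ha]

theorem mem_vertexSubgroup_iff {S : Set V} {x : RAAG Γ} :
    x ∈ vertexSubgroup Γ S ↔ retr Γ S x = x :=
  ⟨retr_fixed, fun h => h ▸ retr_mem S x⟩

theorem vertexSubgroup_mono {S T : Set V} (h : S ⊆ T) :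
    vertexSubgroup Γ S ≤ vertexSubgroup Γ T :=
  Subgroup.closure_mono (Set.image_mono h)

theorem vertexSubgroup_univ : vertexSubgroup Γ Set.univ = ⊤ := by
  rw [vertexSubgroup, Set.image_univ]
  exact PresentedGroup.closure_range_of _

theorem retr_univ (x : RAAG Γ) : retr Γ Set.univ x = x :=
  retr_fixed (by rw [vertexSubgroup_univ]; trivial)

theorem retr_retr (S T : Set V) (x : RAAG Γ) :
    retr Γ S (retr Γ T x) = retr Γ (S ∩ T) x := by
  have : (retr Γ S).comp (retr Γ T) = retr Γ (S ∩ T) := by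
    apply hom_ext
    intro v
    by_cases hv : v ∈ T <;> by_cases hv' : v ∈ S <;>
      simp [hv, hv', Set.mem_inter_iff]
  exact DFunLike.congr_fun this x

section Induced

theorem induce_adj {S : Set V} {a b : S} (h : (Γ.induce S).Adj a b) : Γ.Adj ↑a ↑b := h

/-- Inclusion of the RAAG of an induced subgraph. -/
def inclHom (Γ : SimpleGraph V) (S : Set V) : RAAG (Γ.induce S) →* RAAG Γ :=
  raagHom (fun x => RAAG.gen Γ ↑x) (fun _ _ h => gen_commute (induce_adj h))

@[simp] theorem inclHom_gen (S : Set V) (x : S) :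
    inclHom Γ S (RAAG.gen (Γ.induce S) x) = RAAG.gen Γ ↑x := by
  simp [inclHom]

/-- Projection onto the RAAG of an induced subgraph. -/
def projHom (Γ : SimpleGraph V) (S : Set V) : RAAG Γ →* RAAG (Γ.induce S) :=
  raagHom (fun u => if h : u ∈ S then RAAG.gen (Γ.induce S) ⟨u, h⟩ else 1) (by
    intro u v huv
    by_cases hu : u ∈ S <;> by_cases hv : v ∈ S <;>
      simp [hu, hv, Commute.one_left, Commute.one_right]
    exact gen_commute (by exact huv : (Γ.induce S).Adj ⟨u, hu⟩ ⟨v, hv⟩))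

theorem proj_incl (S : Set V) (y : RAAG (Γ.induce S)) :
    projHom Γ S (inclHom Γ S y) = y := by
  have : (projHom Γ S).comp (inclHom Γ S) = MonoidHom.id _ := by
    apply hom_ext
    rintro ⟨v, hv⟩
    simp [projHom, hv]
  exact DFunLike.congr_fun this y

theorem inclHom_injective (S : Set V) : Function.Injective (inclHom Γ S) :=
  Function.LeftInverse.injective (proj_incl S)

theorem inclHom_mem_vertexSubgroup {S : Set V} {T : Set S} {y : RAAG (Γ.induce S)}
    (hy : y ∈ vertexSubgroup (Γ.induce S) T) :
    inclHom Γ S y ∈ vertexSubgroup Γ (Subtype.val '' T) := by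
  induction hy using Subgroup.closure_induction with
  | mem z hz =>
    rcases hz with ⟨x, hx, rfl⟩
    rw [inclHom_gen]
    exact gen_mem_vertexSubgroup ⟨x, hx, rfl⟩
  | one => exact one_mem _
  | mul a b _ _ ha hb => rw [map_mul]; exact mul_mem ha hb
  | inv a _ ha => rw [map_inv]; exact inv_mem ha

/-- Inclusion between RAAGs of nested induced subgraphs. -/
def subIncl (Γ : SimpleGraph V) {A B : Set V} (h : A ⊆ B) :
    RAAG (Γ.induce A) →* RAAG (Γ.induce B) :=
  raagHom (fun x => RAAG.gen (Γ.induce B) ⟨↑x, h x.2⟩)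
    (fun _ _ hadj => gen_commute (by exact induce_adj hadj))

@[simp] theorem subIncl_gen {A B : Set V} (h : A ⊆ B) (x : A) :
    subIncl Γ h (RAAG.gen (Γ.induce A) x) = RAAG.gen (Γ.induce B) ⟨↑x, h x.2⟩ := by
  simp [subIncl]

theorem incl_subIncl {A B : Set V} (h : A ⊆ B) (y : RAAG (Γ.induce A)) :
    inclHom Γ B (subIncl Γ h y) = inclHom Γ A y := by
  have : (inclHom Γ B).comp (subIncl Γ h) = inclHom Γ A := by
    apply hom_ext; intro x; simp
  exact DFunLike.congr_fun this y

theorem subIncl_injective {A B : Set V} (h : A ⊆ B) :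
    Function.Injective (subIncl Γ h) := by
  intro a b hab
  apply inclHom_injective A
  rw [← incl_subIncl h, ← incl_subIncl h, hab]

end Induced

end RAAGAux

end

noncomputable section
open Classical

namespace PushKey

open Monoid Monoid.PushoutI Monoid.CoprodI

variable {ι : Type*} {G : ι → Type*} [∀ i, Group (G i)] {H : Type*} [Group H]
  {φ : ∀ i, H →* G i}

/-- Product of a list of letters in the pushout. -/
def listProd (φ : ∀ i, H →* G i) (l : List (Σ i, G i)) : PushoutI φ :=
  (l.map fun p => of (φ := φ) p.1 p.2).prod

@[simp] theorem listProd_nil : listProd φ [] = 1 := rfl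

theorem listProd_cons (p : Σ i, G i) (l : List (Σ i, G i)) :
    listProd φ (p :: l) = of p.1 p.2 * listProd φ l := by
  simp [listProd]

theorem listProd_append (l₁ l₂ : List (Σ i, G i)) :
    listProd φ (l₁ ++ l₂) = listProd φ l₁ * listProd φ l₂ := by
  simp [listProd]

theorem listProd_revInv (l : List (Σ i, G i)) :
    listProd φ (l.reverse.map fun p => ⟨p.1, p.2⁻¹⟩) = (listProd φ l)⁻¹ := by
  induction l with
  | nil => simp
  | cons p t ih =>
    rw [List.reverse_cons, List.map_append, listProd_append, ih, listProd_cons]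
    simp [listProd, mul_inv_rev]

theorem ofCoprodI_word_prod (w : Word G) :
    ofCoprodI (φ := φ) w.prod = listProd φ w.toList := by
  rw [Word.prod, map_list_prod, List.map_map]
  simp [listProd, Function.comp_def]

theorem not_mem_range_ne_one {i : ι} {g : G i} (hg : g ∉ (φ i).range) : g ≠ 1 := by
  rintro rfl; exact hg (one_mem _)

theorem listProd_mem_range {i₀ : ι} {l : List (Σ i, G i)}
    (h : ∀ p ∈ l, p.1 = i₀) : listProd φ l ∈ (of (φ := φ) i₀).range := by
  induction l with
  | nil => simp only [listProd_nil]; exact one_mem _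
  | cons p t ih =>
    rcases p with ⟨j, g⟩
    have hj : j = i₀ := h _ List.mem_cons_self
    subst hj
    rw [listProd_cons]
    exact mul_mem ⟨g, rfl⟩ (ih fun q hq => h q (List.mem_cons_of_mem _ hq))

theorem not_reduced_case (hφ : ∀ i, Function.Injective (φ i)) {i₀ : ι}
    {l : List (Σ i, G i)} (hl1 : ∀ p ∈ l, p.2 ∉ (φ p.1).range)
    (hl2 : l.Chain' fun p q => p.1 ≠ q.1) (hne : l ≠ [])
    (hhead : ∀ p ∈ l.head?, p.1 ≠ i₀) (hlast : ∀ p ∈ l.getLast?, p.1 ≠ i₀)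
    {a b : G i₀} (ha : a ∉ (φ i₀).range) (hb : b ∉ (φ i₀).range)
    (heq : listProd φ l * of i₀ a = of i₀ b * listProd φ l) : False := by
  set rev : List (Σ i, G i) := l.reverse.map fun p => ⟨p.1, p.2⁻¹⟩ with hrev
  have hrevne : rev ≠ [] := by
    simp [hrev, hne]
  have hrevmem : ∀ p ∈ rev, p.2 ∉ (φ p.1).range := by
    intro p hp
    rcases List.mem_map.1 hp with ⟨q, hmem, rfl⟩
    intro hr
    exact hl1 _ (List.mem_reverse.1 hmem) ((inv_mem_iff (H := (φ q.1).range)).1 hr)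
  set u : List (Σ i, G i) := l ++ ⟨i₀, a⟩ :: (rev ++ [⟨i₀, b⁻¹⟩]) with hu
  have humem : ∀ p ∈ u, p.2 ∉ (φ p.1).range := by
    intro p hp
    rw [hu] at hp
    rcases List.mem_append.1 hp with h1 | h2
    · exact hl1 _ h1
    · rcases List.mem_cons.1 h2 with rfl | h3
      · exact ha
      · rcases List.mem_append.1 h3 with h4 | h5
        · exact hrevmem _ h4
        · rcases List.mem_singleton.1 h5 with rfl
          exact fun hr => hb ((inv_mem_iff (H := (φ i₀).range)).1 hr)
  have hrevhead : ∀ p ∈ rev.head?, p.1 ≠ i₀ := by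
    intro p hp
    rw [hrev, List.head?_map, List.head?_reverse] at hp
    rcases Option.map_eq_some_iff.1 hp with ⟨q, hq, rfl⟩
    exact hlast q hq
  have hrevlast : ∀ p ∈ rev.getLast?, p.1 ≠ i₀ := by
    intro p hp
    rw [hrev, List.getLast?_map, List.getLast?_reverse] at hp
    rcases Option.map_eq_some_iff.1 hp with ⟨q, hq, rfl⟩
    exact hhead q hq
  have hrevchain : rev.Chain' fun p q => p.1 ≠ q.1 := by
    rw [hrev]; show List.IsChain _ _; rw [List.isChain_map, List.isChain_reverse]
    exact List.IsChain.imp (fun a b h => Ne.symm h) hl2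
  have huchain : u.Chain' fun p q => p.1 ≠ q.1 := by
    rw [hu]; show List.IsChain _ _; rw [List.isChain_append]
    refine ⟨hl2, ?_, ?_⟩
    · rw [List.isChain_cons]
      refine ⟨?_, ?_⟩
      · intro y hy
        rw [List.head?_append_of_ne_nil _ hrevne] at hy
        exact (hrevhead y hy).symm
      · rw [List.isChain_append]
        refine ⟨hrevchain, List.isChain_singleton _, ?_⟩
        intro x hx y hy
        rcases List.mem_singleton.1 (by simpa using hy) with rfl
        exact hrevlast x hx
    · intro x hx y hy
      simp only [List.head?_cons, Option.mem_some_iff] at hy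
      subst hy
      exact hlast x hx
  set w : Word G := ⟨u, fun p hp => not_mem_range_ne_one (humem p hp), huchain⟩ with hw
  have hred : Reduced φ w := fun p hp => humem p hp
  have hprod : ofCoprodI (φ := φ) w.prod = 1 := by
    rw [ofCoprodI_word_prod]
    show listProd φ u = 1
    rw [hu, listProd_append, listProd_cons, listProd_append, listProd_revInv]
    have : listProd φ [(⟨i₀, b⁻¹⟩ : Σ i, G i)] = (of (φ := φ) i₀ b)⁻¹ := by
      simp [listProd]
    rw [this]
    have h2 : listProd φ l * of i₀ a * (listProd φ l)⁻¹ = of i₀ b := by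
      rw [heq]; group
    calc listProd φ l * (of i₀ a * ((listProd φ l)⁻¹ * (of i₀ b)⁻¹))
        = (listProd φ l * of i₀ a * (listProd φ l)⁻¹) * (of i₀ b)⁻¹ := by group
      _ = 1 := by rw [h2]; group
  have := hred.eq_empty_of_mem_range hφ (by rw [hprod]; exact one_mem _)
  have : u = [] := congrArg Word.toList this
  rw [hu] at this
  exact hne (List.append_eq_nil_iff.1 this).1

theorem key (hφ : ∀ i, Function.Injective (φ i)) {i₀ : ι} :
    ∀ (n : ℕ) (l : List (Σ i, G i)), l.length ≤ n →
      (∀ p ∈ l, p.2 ∉ (φ p.1).range) → l.Chain' (fun p q => p.1 ≠ q.1) →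
      ∀ a b : G i₀, (∀ c, c * a * c⁻¹ ∉ (φ i₀).range) →
        (∀ c, c * b * c⁻¹ ∉ (φ i₀).range) →
        listProd φ l * of i₀ a = of i₀ b * listProd φ l →
      ∀ p ∈ l, p.1 = i₀ := by
  intro n
  induction n with
  | zero =>
    intro l hlen _ _ a b _ _ _ p hp
    rw [List.length_eq_zero_iff.1 (Nat.le_zero.1 hlen)] at hp
    simp at hp
  | succ n ih =>
    intro l hlen hl1 hl2 a b ha hb heq
    rcases List.eq_nil_or_concat l with rfl | ⟨t, q, rfl⟩
    · intro p hp; simp at hp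
    simp only [List.concat_eq_append] at hlen hl1 hl2 heq ⊢
    by_cases hq : q.1 = i₀
    · -- strip the last letter
      rcases q with ⟨j, g⟩
      dsimp at hq
      subst hq
      have hlen' : t.length ≤ n := by simp [List.length_append] at hlen; omega
      have hchain' : t.Chain' fun p q => p.1 ≠ q.1 := (List.isChain_append.1 hl2).1
      have hmem' : ∀ p ∈ t, p.2 ∉ (φ p.1).range :=
        fun p hp => hl1 p (List.mem_append_left _ hp)
      have h3 : listProd φ (t ++ [⟨j, g⟩]) = listProd φ t * of j g := by
        rw [listProd_append]; simp [listProd]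
      rw [h3] at heq
      have heq' : listProd φ t * of j (g * a * g⁻¹) = of j b * listProd φ t := by
        calc listProd φ t * of j (g * a * g⁻¹)
            = (listProd φ t * of j g * of j a) * (of (φ := φ) j g)⁻¹ := by
              rw [map_mul, map_mul, map_inv]; group
          _ = (of j b * (listProd φ t * of j g)) * (of (φ := φ) j g)⁻¹ := by rw [heq]
          _ = of j b * listProd φ t := by group
      have hall := ih t hlen' hmem' hchain' (g * a * g⁻¹) b
        (fun c => by
          have h4 : c * (g * a * g⁻¹) * c⁻¹ = (c * g) * a * (c * g)⁻¹ := by group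
          rw [h4]; exact ha _)
        hb heq'
      intro p hp
      rcases List.mem_append.1 hp with h | h
      · exact hall p h
      · rcases List.mem_singleton.1 h with rfl; rfl
    · -- the last letter is not from `G i₀`
      have hlne : t ++ [q] ≠ [] := by simp
      rcases List.exists_cons_of_ne_nil hlne with ⟨p₀, s, hcons⟩
      by_cases hp₀ : p₀.1 = i₀
      · -- strip the first letter
        rcases p₀ with ⟨j, g⟩
        dsimp at hp₀
        subst hp₀
        rw [hcons] at heq hl1 hl2 hlen ⊢
        have hlen' : s.length ≤ n := by simp at hlen; omega
        have hchain' : s.Chain' fun p q => p.1 ≠ q.1 := hl2.tail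
        have hmem' : ∀ p ∈ s, p.2 ∉ (φ p.1).range :=
          fun p hp => hl1 p (List.mem_cons_of_mem _ hp)
        simp only [listProd_cons] at heq
        have heq' : listProd φ s * of j a = of j (g⁻¹ * b * g) * listProd φ s := by
          calc listProd φ s * of j a
              = (of (φ := φ) j g)⁻¹ * (of j g * listProd φ s * of j a) := by group
            _ = (of (φ := φ) j g)⁻¹ * (of j b * (of j g * listProd φ s)) := by
                rw [mul_assoc] at heq; rw [← mul_assoc] at heq; rw [heq]
            _ = of j (g⁻¹ * b * g) * listProd φ s := by
                rw [map_mul, map_mul, map_inv]; group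
        have hall := ih s hlen' hmem' hchain' a (g⁻¹ * b * g) ha
          (fun c => by
            have h4 : c * (g⁻¹ * b * g) * c⁻¹ = (c * g⁻¹) * b * (c * g⁻¹)⁻¹ := by group
            rw [h4]; exact hb _)
          heq'
        intro p hp
        rcases List.mem_cons.1 hp with rfl | h
        · rfl
        · exact hall p h
      · -- both ends avoid `i₀`: contradiction
        exfalso
        refine not_reduced_case hφ hl1 hl2 hlne ?_ ?_
          (by simpa using ha 1) (by simpa using hb 1) heq
        · intro p hp
          rw [hcons, List.head?_cons, Option.mem_some_iff] at hp
          subst hp; exact hp₀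
        · intro p hp
          rw [List.getLast?_concat, Option.mem_some_iff] at hp
          subst hp; exact hq

theorem set_ne_one_not_mem_range (d : NormalWord.Transversal φ) {i : ι} {g : G i}
    (hset : g ∈ d.set i) (hg : g ≠ 1) : g ∉ (φ i).range := by
  intro hr
  have hinj := (d.compl i).1
  have := hinj (a₁ := (⟨⟨g, hr⟩, ⟨1, d.one_mem i⟩⟩ :
      ((φ i).range : Set (G i)) × (d.set i)))
    (a₂ := (⟨⟨1, one_mem _⟩, ⟨g, hset⟩⟩ : ((φ i).range : Set (G i)) × (d.set i)))
    (by simp)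
  have h2 := congrArg (fun z => (z.2 : G i)) this
  simp at h2
  exact hg h2.symm

/-- The central theorem: in an amalgamated product with injective edge maps, any element
commuting with `of i₀ a`, where no `G i₀`-conjugate of `a` lies in the base group,
belongs to `(of i₀).range`. -/
theorem commute_mem_of_range (hφ : ∀ i, Function.Injective (φ i)) {i₀ : ι}
    {a : G i₀} (ha : ∀ c : G i₀, c * a * c⁻¹ ∉ (φ i₀).range)
    {x : PushoutI φ} (hx : x * of i₀ a = of i₀ a * x) :
    x ∈ (of (φ := φ) i₀).range := by
  obtain ⟨d⟩ := NormalWord.transversal_nonempty φ hφ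
  set W : NormalWord d := x • NormalWord.empty with hW
  have hWprod : W.prod = x := by
    rw [hW, NormalWord.prod_smul, NormalWord.prod_empty, mul_one]
  have hxeq : x = base φ W.head * listProd φ W.toList := by
    rw [← hWprod]
    rw [show W.prod = base φ W.head * ofCoprodI W.toWord.prod from rfl,
      ofCoprodI_word_prod]
  have hlmem : ∀ p ∈ W.toList, p.2 ∉ (φ p.1).range := fun p hp =>
    set_ne_one_not_mem_range d (W.normalized p.1 p.2 hp) (W.toWord.ne_one p hp)
  have hlchain : W.toList.Chain' fun p q => p.1 ≠ q.1 := W.toWord.chain_ne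
  set c : G i₀ := φ i₀ W.head with hc
  have hbase : base φ W.head = of i₀ c := (of_apply_eq_base φ i₀ W.head).symm
  set L := listProd φ W.toList with hL
  have heq : L * of i₀ a = of i₀ (c⁻¹ * a * c) * L := by
    rw [hxeq, hbase] at hx
    calc L * of i₀ a
        = (of (φ := φ) i₀ c)⁻¹ * (of i₀ c * L * of i₀ a) := by group
      _ = (of (φ := φ) i₀ c)⁻¹ * (of i₀ a * (of i₀ c * L)) := by
          rw [mul_assoc] at hx; rw [← mul_assoc] at hx; rw [hx]
      _ = of i₀ (c⁻¹ * a * c) * L := by rw [map_mul, map_mul, map_inv]; group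
  have hall := key hφ W.toList.length W.toList le_rfl hlmem hlchain a (c⁻¹ * a * c)
    ha
    (fun c' => by
      have h4 : c' * (c⁻¹ * a * c) * c'⁻¹ = (c' * c⁻¹) * a * (c' * c⁻¹)⁻¹ := by group
      rw [h4]; exact ha _)
    heq
  rw [hxeq, hbase]
  exact mul_mem ⟨c, rfl⟩ (listProd_mem_range hall)

end PushKey

end

noncomputable section
open Classical Monoid Monoid.PushoutI

namespace RAAGAux

variable {V : Type} (Γ : SimpleGraph V) (w : V)

/-- Vertices distinct from `w`. -/
def Sm (w : V) : Set V := {x | x ≠ w}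
/-- The link of `w`. -/
def Lk (Γ : SimpleGraph V) (w : V) : Set V := {x | Γ.Adj w x}

theorem lk_subset_star : Lk Γ w ⊆ starOfVertex Γ w := fun _ h => Or.inr h
theorem lk_subset_sm : Lk Γ w ⊆ Sm w := fun _ h => h.ne'
theorem mem_star_self : w ∈ starOfVertex Γ w := Or.inl rfl

/-- The `Bool`-indexed family: `true ↦ A(star w)`, `false ↦ A(Γ - w)`. -/
def Gfam : Bool → Type :=
  fun b => Bool.rec (RAAG (Γ.induce (Sm w))) (RAAG (Γ.induce (starOfVertex Γ w))) b

instance : ∀ b, Group (Gfam Γ w b) := fun b => by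
  cases b
  · exact inferInstanceAs (Group (RAAG (Γ.induce (Sm w))))
  · exact inferInstanceAs (Group (RAAG (Γ.induce (starOfVertex Γ w))))

/-- The edge maps of the splitting of `A(Γ)` along the star of `w`. -/
def edge : ∀ b, RAAG (Γ.induce (Lk Γ w)) →* Gfam Γ w b :=
  fun b => Bool.rec (subIncl Γ (lk_subset_sm Γ w)) (subIncl Γ (lk_subset_star Γ w)) b

theorem edge_injective : ∀ b, Function.Injective (edge Γ w b) := fun b => by
  cases b
  · exact subIncl_injective (lk_subset_sm Γ w)
  · exact subIncl_injective (lk_subset_star Γ w)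

/-- The map `A(Γ) → A(star w) *_{A(link w)} A(Γ - w)`. -/
def toPush : RAAG Γ →* PushoutI (edge Γ w) :=
  raagHom
    (fun v =>
      if h : v = w then of (φ := edge Γ w) true (RAAG.gen _ ⟨w, mem_star_self Γ w⟩)
      else of (φ := edge Γ w) false (RAAG.gen _ ⟨v, h⟩))
    (by
      intro u v huv
      have keyuv : ∀ (v : V) (huv : Γ.Adj w v),
          Commute (of (φ := edge Γ w) true (RAAG.gen _ ⟨w, mem_star_self Γ w⟩))
            (of (φ := edge Γ w) false (RAAG.gen _ ⟨v, huv.ne'⟩)) := by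
        intro v huv
        have hvL : v ∈ Lk Γ w := huv
        have h1 : of (φ := edge Γ w) false (RAAG.gen (Γ.induce (Sm w)) ⟨v, huv.ne'⟩)
            = of (φ := edge Γ w) true (RAAG.gen (Γ.induce (starOfVertex Γ w)) ⟨v, Or.inr huv⟩) := by
          have h2 := of_apply_eq_base (edge Γ w) false (RAAG.gen (Γ.induce (Lk Γ w)) ⟨v, hvL⟩)
          have h3 := of_apply_eq_base (edge Γ w) true (RAAG.gen (Γ.induce (Lk Γ w)) ⟨v, hvL⟩)
          have e2 : edge Γ w false (RAAG.gen (Γ.induce (Lk Γ w)) ⟨v, hvL⟩)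
              = RAAG.gen (Γ.induce (Sm w)) ⟨v, huv.ne'⟩ := by
            rw [show edge Γ w false = subIncl Γ (lk_subset_sm Γ w) from rfl]
            exact subIncl_gen _ _
          have e3 : edge Γ w true (RAAG.gen (Γ.induce (Lk Γ w)) ⟨v, hvL⟩)
              = RAAG.gen (Γ.induce (starOfVertex Γ w)) ⟨v, Or.inr huv⟩ := by
            rw [show edge Γ w true = subIncl Γ (lk_subset_star Γ w) from rfl]
            exact subIncl_gen _ _
          rw [e2] at h2; rw [e3] at h3
          rw [h2, h3]
        rw [h1]
        exact (gen_commute (by exact huv :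
          (Γ.induce (starOfVertex Γ w)).Adj ⟨w, mem_star_self Γ w⟩ ⟨v, Or.inr huv⟩)).map _
      by_cases hu : u = w <;> by_cases hv : v = w
      · exact absurd (hu ▸ hv ▸ huv) (Γ.irrefl)
      · simp only [dif_pos hu, dif_neg hv]
        subst hu
        exact keyuv v huv
      · simp only [dif_neg hu, dif_pos hv]
        subst hv
        exact (keyuv u huv.symm).symm
      · simp only [dif_neg hu, dif_neg hv]
        exact (gen_commute (by exact huv :
          (Γ.induce (Sm w)).Adj ⟨u, hu⟩ ⟨v, hv⟩)).map _)

@[simp] theorem toPush_gen_ne {v : V} (h : v ≠ w) :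
    toPush Γ w (RAAG.gen Γ v) = of (φ := edge Γ w) false (RAAG.gen _ ⟨v, h⟩) := by
  rw [toPush, raagHom_gen, dif_neg h]

/-- The map back. -/
def fromPush : PushoutI (edge Γ w) →* RAAG Γ :=
  PushoutI.lift
    (fun b => Bool.rec (inclHom Γ (Sm w)) (inclHom Γ (starOfVertex Γ w)) b)
    (inclHom Γ (Lk Γ w))
    (by
      intro b
      cases b
      · apply hom_ext; intro x
        show inclHom Γ (Sm w) (subIncl Γ (lk_subset_sm Γ w) (RAAG.gen _ x)) = _
        rw [subIncl_gen, inclHom_gen, inclHom_gen]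
      · apply hom_ext; intro x
        show inclHom Γ (starOfVertex Γ w) (subIncl Γ (lk_subset_star Γ w) (RAAG.gen _ x)) = _
        rw [subIncl_gen, inclHom_gen, inclHom_gen])

@[simp] theorem fromPush_of_false (y : RAAG (Γ.induce (Sm w))) :
    fromPush Γ w (of (φ := edge Γ w) false y) = inclHom Γ (Sm w) y := by
  rw [fromPush]; exact PushoutI.lift_of (φ := edge Γ w) (K := RAAG Γ) _ _ _ (i := false) y

@[simp] theorem fromPush_of_true (y : RAAG (Γ.induce (starOfVertex Γ w))) :
    fromPush Γ w (of (φ := edge Γ w) true y) = inclHom Γ (starOfVertex Γ w) y := by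
  rw [fromPush]; exact PushoutI.lift_of (φ := edge Γ w) (K := RAAG Γ) _ _ _ (i := true) y

theorem fromPush_toPush (x : RAAG Γ) : fromPush Γ w (toPush Γ w x) = x := by
  have : (fromPush Γ w).comp (toPush Γ w) = MonoidHom.id _ := by
    apply hom_ext
    intro v
    simp only [MonoidHom.comp_apply, MonoidHom.id_apply]
    by_cases h : v = w
    · subst h
      rw [toPush, raagHom_gen, dif_pos rfl, fromPush_of_true, inclHom_gen]
    · rw [toPush_gen_ne Γ w h, fromPush_of_false, inclHom_gen]
  exact DFunLike.congr_fun this x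


theorem expHom_gen_zpow {V : Type*} (Γ : SimpleGraph V) (v : V) (n : ℤ) :
    expHom Γ v ((RAAG.gen Γ v) ^ n) = Multiplicative.ofAdd n := by
  rw [map_zpow, expHom_gen_self, ← ofAdd_zsmul, smul_eq_mul, mul_one]

/-- Centralizers of nonzero powers of generators lie in the star. -/
theorem centralizer_power_mem_star :
    ∀ (N : ℕ) (V : Type) [Fintype V] (Γ : SimpleGraph V), Fintype.card V ≤ N →
      ∀ (v : V) (n : ℤ), n ≠ 0 →
      ∀ k : RAAG Γ, k * (RAAG.gen Γ v) ^ n = (RAAG.gen Γ v) ^ n * k →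
      k ∈ vertexSubgroup Γ (starOfVertex Γ v) := by
  intro N
  induction N with
  | zero =>
    intro V _ Γ hcard v
    have : 0 < Fintype.card V := Fintype.card_pos_iff.2 ⟨v⟩
    omega
  | succ N ih =>
    intro V _ Γ hcard v n hn k hk
    by_cases hstar : ∀ x, x ∈ starOfVertex Γ v
    · rw [Set.eq_univ_of_forall hstar, vertexSubgroup_univ]; trivial
    push_neg at hstar
    obtain ⟨w, hw⟩ := hstar
    have hwv : ¬ (w = v) := fun h => hw (Or.inl h)
    have hnadj : ¬ Γ.Adj v w := fun h => hw (Or.inr h)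
    have hvw : v ≠ w := fun h => hwv h.symm
    set v' : (Sm w : Set V) := ⟨v, hvw⟩ with hv'
    -- push the commutation relation into the pushout
    have hgen : toPush Γ w ((RAAG.gen Γ v) ^ n)
        = of (φ := edge Γ w) false ((RAAG.gen (Γ.induce (Sm w)) v') ^ n) := by
      rw [map_zpow, toPush_gen_ne Γ w hvw]; exact (map_zpow _ _ _).symm
    have hpush : toPush Γ w k * of (φ := edge Γ w) false ((RAAG.gen (Γ.induce (Sm w)) v') ^ n)
        = of (φ := edge Γ w) false ((RAAG.gen (Γ.induce (Sm w)) v') ^ n) * toPush Γ w k := by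
      rw [← hgen, ← map_mul, hk, map_mul]
    -- no conjugate of the power meets the edge group
    have ha : ∀ c : RAAG (Γ.induce (Sm w)),
        c * (RAAG.gen (Γ.induce (Sm w)) v') ^ n * c⁻¹ ∉ (edge Γ w false).range := by
      intro c hc
      obtain ⟨y, hy⟩ := hc
      set ψ := expHom (Γ.induce (Sm w)) v' with hψ
      have hcomp : ψ.comp (edge Γ w false) = 1 := by
        apply hom_ext
        intro x
        show ψ (subIncl Γ (lk_subset_sm Γ w) (RAAG.gen _ x)) =
          (1 : RAAG (Γ.induce (Lk Γ w)) →* Multiplicative ℤ) (RAAG.gen _ x)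
        rw [subIncl_gen]
        have hxv : (⟨↑x, lk_subset_sm Γ w x.2⟩ : (Sm w : Set V)) ≠ v' := by
          intro hxx
          have : (↑x : V) = v := congrArg Subtype.val hxx
          exact hnadj (this ▸ x.2).symm
        rw [hψ, expHom, raagHom_gen, if_neg hxv]
        simp
      have h1 : ψ (edge Γ w false y) = 1 := by
        have h := DFunLike.congr_fun hcomp y
        exact h
      rw [hy] at h1
      rw [map_mul, map_mul, map_inv, mul_comm (ψ c), mul_assoc, mul_inv_cancel, mul_one,
        expHom_gen_zpow] at h1
      exact hn (by simpa using h1)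
    obtain ⟨kQ, hkQ⟩ := PushKey.commute_mem_of_range (φ := edge Γ w) (edge_injective Γ w)
      (i₀ := false) (a := (RAAG.gen (Γ.induce (Sm w)) v') ^ n) ha hpush
    change RAAG (Γ.induce (Sm w)) at kQ
    have hkval : k = inclHom Γ (Sm w) kQ := by
      rw [← fromPush_toPush Γ w k, ← hkQ, fromPush_of_false]
    have hkQcomm : kQ * (RAAG.gen (Γ.induce (Sm w)) v') ^ n
        = (RAAG.gen (Γ.induce (Sm w)) v') ^ n * kQ := by
      apply inclHom_injective (Γ := Γ) (Sm w)
      have hg : inclHom Γ (Sm w) ((RAAG.gen (Γ.induce (Sm w)) v') ^ n) = (RAAG.gen Γ v) ^ n := by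
        rw [map_zpow, inclHom_gen]
      rw [map_mul, map_mul, hg, ← hkval, hk]
    have hcard' : Fintype.card (Sm w : Set V) ≤ N := by
      have hlt : Fintype.card (Sm w : Set V) < Fintype.card V :=
        Fintype.card_lt_of_injective_of_notMem Subtype.val Subtype.coe_injective
          (b := w) (by rintro ⟨⟨x, hx⟩, h⟩; exact hx h)
      omega
    have hind := ih (Sm w : Set V) (Γ.induce (Sm w)) hcard' v' n hn kQ hkQcomm
    rw [hkval]
    refine vertexSubgroup_mono ?_ (inclHom_mem_vertexSubgroup hind)
    rintro x ⟨y, hy, rfl⟩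
    rcases hy with h | h
    · exact Or.inl (congrArg Subtype.val h)
    · exact Or.inr (induce_adj h)

end RAAGAux

end

noncomputable section
open Classical Pointwise

namespace RAAGAux

variable {V : Type} [Fintype V] (Γ : SimpleGraph V) (Λ : Set V)

theorem star_le_normalizer :
    vertexSubgroup Γ (starSet Γ Λ) ≤ Subgroup.normalizer (vertexSubgroup Γ Λ : Set (RAAG Γ)) := by
  rw [vertexSubgroup]
  apply (Subgroup.closure_le _).2
  rintro _ ⟨s, hs, rfl⟩
  rw [SetLike.mem_coe]
  rcases hs with hs | hs
  · exact Subgroup.le_normalizer (gen_mem_vertexSubgroup hs)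
  · have hcent : ∀ x ∈ vertexSubgroup Γ Λ, RAAG.gen Γ s * x * (RAAG.gen Γ s)⁻¹ = x := by
      intro x hx
      induction hx using Subgroup.closure_induction with
      | mem y hy =>
        rcases hy with ⟨u, hu, rfl⟩
        rw [(gen_commute (hs u hu)).eq]; group
      | one => group
      | mul a b _ _ hA hB =>
        calc RAAG.gen Γ s * (a * b) * (RAAG.gen Γ s)⁻¹
            = (RAAG.gen Γ s * a * (RAAG.gen Γ s)⁻¹) * (RAAG.gen Γ s * b * (RAAG.gen Γ s)⁻¹) := by
              group
          _ = a * b := by rw [hA, hB]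
      | inv a _ hA =>
        calc RAAG.gen Γ s * a⁻¹ * (RAAG.gen Γ s)⁻¹
            = (RAAG.gen Γ s * a * (RAAG.gen Γ s)⁻¹)⁻¹ := by group
          _ = a⁻¹ := by rw [hA]
    rw [Subgroup.mem_normalizer_iff]
    intro h
    constructor
    · intro hh
      rw [hcent h hh]; exact hh
    · intro hh
      have e3 : RAAG.gen Γ s * (RAAG.gen Γ s * h * (RAAG.gen Γ s)⁻¹) * (RAAG.gen Γ s)⁻¹
          = RAAG.gen Γ s * h * (RAAG.gen Γ s)⁻¹ := hcent _ hh
      have e4 : RAAG.gen Γ s * h * (RAAG.gen Γ s)⁻¹ = h :=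
        mul_left_cancel (mul_right_cancel e3)
      exact e4 ▸ hh

theorem normalizer_le_commensurator {G : Type*} [Group G] (H : Subgroup G) :
    Subgroup.normalizer (H : Set G) ≤ Subgroup.Commensurable.commensurator H := by
  intro g hg
  rw [Subgroup.Commensurable.commensurator_mem_iff]
  have hsmul : ConjAct.toConjAct g • H = H := by
    ext x
    rw [Subgroup.mem_pointwise_smul_iff_inv_smul_mem]
    rw [Subgroup.mem_normalizer_iff] at hg
    have h2 := hg (g⁻¹ * x * g)
    have e : g * (g⁻¹ * x * g) * g⁻¹ = x := by group
    rw [e] at h2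
    simpa [ConjAct.smul_def, mul_assoc] using h2
  rw [hsmul]

theorem mem_star_of_forall {k : RAAG Γ}
    (h : ∀ v ∈ Λ, k ∈ vertexSubgroup Γ (starOfVertex Γ v)) :
    k ∈ vertexSubgroup Γ (starSet Γ Λ) := by
  have aux : ∀ F : Finset V, (∀ v ∈ F, k ∈ vertexSubgroup Γ (starOfVertex Γ v)) →
      retr Γ (⋂ v ∈ F, starOfVertex Γ v) k = k := by
    intro F
    induction F using Finset.induction_on with
    | empty =>
      intro _
      have he : (⋂ v ∈ (∅ : Finset V), starOfVertex Γ v) = Set.univ := by simp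
      rw [he]; exact retr_univ k
    | insert a F hnot ihF =>
      intro hF
      have hT : (⋂ v ∈ insert a F, starOfVertex Γ v)
          = starOfVertex Γ a ∩ ⋂ v ∈ F, starOfVertex Γ v := by
        simp [Set.biInter_insert]
      rw [hT, ← retr_retr, ihF (fun v hv => hF v (Finset.mem_insert_of_mem hv)),
        retr_fixed (hF a (Finset.mem_insert_self a F))]
  have haux := aux Λ.toFinset (fun v hv => h v (Set.mem_toFinset.1 hv))
  have hsub : (⋂ v ∈ Λ.toFinset, starOfVertex Γ v) ⊆ starSet Γ Λ := by
    intro x hx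
    by_cases hxΛ : x ∈ Λ
    · exact Or.inl hxΛ
    · refine Or.inr ?_
      intro u hu
      have hxu : x ∈ starOfVertex Γ u := by
        have := Set.mem_iInter.1 hx u
        exact Set.mem_iInter.1 this (Set.mem_toFinset.2 hu)
      rcases hxu with h' | h'
      · exact absurd (h' ▸ hu) hxΛ
      · exact h'.symm
  exact vertexSubgroup_mono hsub (mem_vertexSubgroup_iff.2 haux)

theorem exists_zpow_mem (C : Subgroup (RAAG Γ)) (v : V)
    (hrel : C.relIndex (Subgroup.zpowers (RAAG.gen Γ v)) ≠ 0) :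
    ∃ m : ℤ, m ≠ 0 ∧ (RAAG.gen Γ v) ^ m ∈ C := by
  by_contra hcon
  push_neg at hcon
  have hbot : C.subgroupOf (Subgroup.zpowers (RAAG.gen Γ v)) = ⊥ := by
    rw [Subgroup.eq_bot_iff_forall]
    rintro ⟨z, hz⟩ hmem
    rcases Subgroup.mem_zpowers_iff.1 hz with ⟨m, rfl⟩
    rw [Subgroup.mem_subgroupOf] at hmem
    by_cases hm : m = 0
    · subst hm
      ext
      simp
    · exact absurd hmem (hcon m hm)
  rw [Subgroup.relIndex, hbot, Subgroup.index_bot, Nat.card_zpowers] at hrel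
  exact hrel (orderOf_gen v)

theorem commensurator_le_star :
    Subgroup.Commensurable.commensurator (vertexSubgroup Γ Λ) ≤ vertexSubgroup Γ (starSet Γ Λ) := by
  intro g hg
  set A := vertexSubgroup Γ Λ with hA
  set r := retr Γ (starSet Γ Λ) with hr
  set k := (r g)⁻¹ * g with hkdef
  have hΛstar : Λ ⊆ starSet Γ Λ := Set.subset_union_left
  have hkstar : ∀ v ∈ Λ, k ∈ vertexSubgroup Γ (starOfVertex Γ v) := by
    intro v hv
    have hginv : g⁻¹ ∈ Subgroup.Commensurable.commensurator A := inv_mem hg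
    rw [Subgroup.Commensurable.commensurator_mem_iff] at hginv
    have h1 : ((ConjAct.toConjAct g⁻¹ • A) ⊓ A).relIndex A ≠ 0 := by
      rw [Subgroup.inf_relIndex_right]; exact hginv.1
    have hZle : Subgroup.zpowers (RAAG.gen Γ v) ≤ A :=
      Subgroup.zpowers_le.2 (gen_mem_vertexSubgroup hv)
    have h2 : A.relIndex (Subgroup.zpowers (RAAG.gen Γ v)) ≠ 0 := by
      rw [Subgroup.relIndex_eq_one.2 hZle]; exact one_ne_zero
    have h3 := Subgroup.relIndex_ne_zero_trans h1 h2
    obtain ⟨m, hm0, hmC⟩ := exists_zpow_mem Γ _ v h3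
    rw [Subgroup.mem_inf] at hmC
    have hxA : (RAAG.gen Γ v) ^ m ∈ A := hmC.2
    have hconj : g * (RAAG.gen Γ v) ^ m * g⁻¹ ∈ A := by
      have h4 := hmC.1
      rw [Subgroup.mem_pointwise_smul_iff_inv_smul_mem] at h4
      simpa [ConjAct.smul_def, mul_assoc] using h4
    have hrx : r ((RAAG.gen Γ v) ^ m) = (RAAG.gen Γ v) ^ m :=
      retr_fixed (vertexSubgroup_mono hΛstar hxA)
    have hrconj : r (g * (RAAG.gen Γ v) ^ m * g⁻¹) = g * (RAAG.gen Γ v) ^ m * g⁻¹ :=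
      retr_fixed (vertexSubgroup_mono hΛstar hconj)
    have heq : r g * (RAAG.gen Γ v) ^ m * (r g)⁻¹ = g * (RAAG.gen Γ v) ^ m * g⁻¹ := by
      rw [← hrconj, map_mul, map_mul, map_inv, hrx]
    have hcomm : k * (RAAG.gen Γ v) ^ m = (RAAG.gen Γ v) ^ m * k := by
      rw [hkdef]
      have h5 : (r g)⁻¹ * (g * (RAAG.gen Γ v) ^ m * g⁻¹) * r g = (RAAG.gen Γ v) ^ m := by
        rw [← heq]; group
      calc (r g)⁻¹ * g * (RAAG.gen Γ v) ^ m
          = ((r g)⁻¹ * (g * (RAAG.gen Γ v) ^ m * g⁻¹) * r g) * ((r g)⁻¹ * g) := by group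
        _ = (RAAG.gen Γ v) ^ m * ((r g)⁻¹ * g) := by rw [h5]
    exact centralizer_power_mem_star (Fintype.card V) V Γ le_rfl v m hm0 k hcomm
  have hkmem := mem_star_of_forall Γ Λ hkstar
  have hrg : r g ∈ vertexSubgroup Γ (starSet Γ Λ) := retr_mem _ g
  have hgrk : g = r g * k := by rw [hkdef]; group
  rw [hgrk]
  exact mul_mem hrg hkmem

theorem main (Γ : SimpleGraph V) (Λ : Set V) :
    Subgroup.Commensurable.commensurator (vertexSubgroup Γ Λ) = Subgroup.normalizer (vertexSubgroup Γ Λ : Set (RAAG Γ)) ∧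
    Subgroup.normalizer (vertexSubgroup Γ Λ : Set (RAAG Γ)) = vertexSubgroup Γ (starSet Γ Λ) := by
  have h1 := star_le_normalizer Γ Λ
  have h2 := normalizer_le_commensurator (vertexSubgroup Γ Λ)
  have h3 := commensurator_le_star Γ Λ
  exact ⟨le_antisymm (le_trans h3 h1) h2, le_antisymm (le_trans h2 h3) h1⟩

end RAAGAux

end

/-- For an induced subgraph `Λ` of a finite simple graph `Γ`, the
commensurator of `⟨Λ⟩` in `A(Γ)` equals its normaliser, and both equal `⟨star(Λ)⟩`. -/
theorem raag_commensurator_eq_normalizer_eq_star {V : Type} [Fintype V]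
    (Γ : SimpleGraph V) (Λ : Set V) :
    Subgroup.Commensurable.commensurator (vertexSubgroup Γ Λ) = Subgroup.normalizer (vertexSubgroup Γ Λ : Set (RAAG Γ)) ∧
    Subgroup.normalizer (vertexSubgroup Γ Λ : Set (RAAG Γ)) = vertexSubgroup Γ (starSet Γ Λ) := by
  exact RAAGAux.main Γ Λ
end CoarseGraph
end

section
/- Every finite simple graph X admits a complete-cut-decomposition, i.e. there exist a finite tree T and a collection of induced subgraphs (V_s)_{s ∈ V(T)} of X indexed by the vertices of T such that: every edge of X is an edge of some V_s; for every s ∈ V(T), the subgraph V_s has no complete cut; and for all adjacent r, s ∈ V(T), the intersection V_r ∩ V_s is a complete cut of X properly contained in both V_r and V_s. -/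
/-! ## Coarse geometry of graphs -/

section CoarseGraph

variable {W : Type*}

namespace CCD

variable {V : Type*} (X : SimpleGraph V)

def Reach (A : Set V) (x y : V) : Prop :=
  Relation.ReflTransGen (fun a b => a ∈ A ∧ b ∈ A ∧ X.Adj a b) x y

variable {X}

lemma Reach.mono {A B : Set V} (h : A ⊆ B) {x y : V} (hr : Reach X A x y) : Reach X B x y :=
  by induction hr with
    | refl => exact .refl
    | tail _ hbc ih => exact ih.tail ⟨h hbc.1, h hbc.2.1, hbc.2.2⟩

lemma Reach.symm {A : Set V} {x y : V} (hr : Reach X A x y) : Reach X A y x :=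
  by induction hr with
    | refl => exact .refl
    | tail _ h ih => exact ih.head ⟨h.2.1, h.1, h.2.2.symm⟩

lemma Reach.trans {A : Set V} {x y z : V} (h1 : Reach X A x y) (h2 : Reach X A y z) :
    Reach X A x z := Relation.ReflTransGen.trans h1 h2

lemma Reach.single {A : Set V} {x y : V} (hx : x ∈ A) (hy : y ∈ A) (h : X.Adj x y) :
    Reach X A x y := Relation.ReflTransGen.single ⟨hx, hy, h⟩

lemma Reach.stay {A C : Set V} (hC : ∀ u ∈ C, ∀ v ∈ A, X.Adj u v → v ∈ C)
    {x y : V} (hx : x ∈ C) (hr : Reach X A x y) : y ∈ C := by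
  induction hr with
  | refl => exact hx
  | tail _ h ih => exact hC _ ih _ h.2.1 h.2.2

lemma Reach.restrict {A : Set V} {x y : V} (hr : Reach X A x y) :
    Reach X {w ∈ A | Reach X A x w} x y := by
  induction hr with
  | refl => exact Relation.ReflTransGen.refl
  | @tail b c hxb h ih =>
      exact ih.tail ⟨⟨h.1, hxb⟩, ⟨h.2.1, hxb.tail h⟩, h.2.2⟩

lemma preconnected_induce_iff {A : Set V} :
    (X.induce A).Preconnected ↔ ∀ x ∈ A, ∀ y ∈ A, Reach X A x y := by
  constructor
  · intro h x hx y hy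
    obtain ⟨w⟩ := h ⟨x, hx⟩ ⟨y, hy⟩
    have : ∀ (u v : A) (_ : (X.induce A).Walk u v), Reach X A u.1 v.1 := by
      intro u v p
      induction p with
      | nil => exact Relation.ReflTransGen.refl
      | @cons a b c hab _ ih =>
          exact Relation.ReflTransGen.head ⟨a.2, b.2, hab⟩ ih
    exact this _ _ w
  · intro h ⟨x, hx⟩ ⟨y, hy⟩
    have hr := h x hx y hy
    have : ∀ (y : V) (_ : Reach X A x y) (hy : y ∈ A),
        (X.induce A).Reachable ⟨x, hx⟩ ⟨y, hy⟩ := by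
      intro y hr
      induction hr with
      | refl => intro _; rfl
      | @tail b c hxb h ih =>
          intro hc
          exact (ih h.1).trans (SimpleGraph.Adj.reachable (by exact h.2.2))
    exact this y hr hy

/-! ## New part -/

variable (X)

/-- `c` separates the set `S`. -/
def MySep (S c : Set V) : Prop :=
  ∃ x ∈ S \ c, ∃ y ∈ S \ c, ¬ Reach X (S \ c) x y

/-- `c` is a complete cut of the induced subgraph on `S`. -/
def CutOf (S c : Set V) : Prop := X.IsClique c ∧ c ⊆ S ∧ MySep X S c

variable {X}

lemma separatesGraph_iff {c : Set V} : SeparatesGraph X c ↔ MySep X Set.univ c := by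
  unfold SeparatesGraph MySep
  have hset : {v : V | v ∉ c} = Set.univ \ c := by ext v; simp
  rw [hset, preconnected_induce_iff]
  push_neg
  rfl

/-- Transfer a `ReflTransGen` at subtype level down to `Reach`. -/
lemma reach_of_subtype {S : Set V} {t : Set S} {x y : S}
    (h : Relation.ReflTransGen
      (fun a b => a ∈ t ∧ b ∈ t ∧ (X.induce S).Adj a b) x y) :
    Reach X (Subtype.val '' t) x.1 y.1 := by
  induction h with
  | refl => exact Relation.ReflTransGen.refl
  | @tail b c _ h ih =>
      exact ih.tail ⟨⟨b, h.1, rfl⟩, ⟨c, h.2.1, rfl⟩, h.2.2⟩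

lemma reach_to_subtype {S : Set V} {t : Set S} {x y : V}
    (h : Reach X (Subtype.val '' t) x y) :
    ∀ (hx : x ∈ Subtype.val '' t) (hy : y ∈ Subtype.val '' t),
      Relation.ReflTransGen
        (fun a b => a ∈ t ∧ b ∈ t ∧ (X.induce S).Adj a b)
        ⟨x, by obtain ⟨x', hx', rfl⟩ := hx; exact x'.2⟩
        ⟨y, by obtain ⟨y', hy', rfl⟩ := hy; exact y'.2⟩ := by
  induction h with
  | refl => intro hx hy; exact Relation.ReflTransGen.refl
  | @tail b c hxb h ih =>
      intro hx hy
      have hb : b ∈ Subtype.val '' t := h.1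
      have hmb : (⟨b, by obtain ⟨b', hb', rfl⟩ := hb; exact b'.2⟩ : S) ∈ t := by
        obtain ⟨b', hb', rfl⟩ := h.1; exact hb'
      have hmc : (⟨c, by obtain ⟨c', hc', rfl⟩ := hy; exact c'.2⟩ : S) ∈ t := by
        obtain ⟨c', hc', rfl⟩ := hy; exact hc'
      exact (ih hx hb).tail ⟨hmb, hmc, by exact h.2.2⟩

/-- From a complete cut of an induced subgraph, get a `CutOf`. -/
lemma cutOf_of_completeCut {S : Set V} {c : Set S}
    (h : CompleteCut (X.induce S) c) : CutOf X S (Subtype.val '' c) := by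
  obtain ⟨hclq, hsep⟩ := h
  refine ⟨?_, ?_, ?_⟩
  · intro x hx y hy hxy
    obtain ⟨x', hx', rfl⟩ := hx
    obtain ⟨y', hy', rfl⟩ := hy
    have : x' ≠ y' := fun h => hxy (by rw [h])
    exact hclq hx' hy' this
  · rintro x ⟨x', _, rfl⟩; exact x'.2
  · unfold SeparatesGraph at hsep
    rw [preconnected_induce_iff] at hsep
    push_neg at hsep
    obtain ⟨x, hx, y, hy, hnr⟩ := hsep
    refine ⟨x.1, ⟨x.2, ?_⟩, y.1, ⟨y.2, ?_⟩, ?_⟩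
    · rintro ⟨x', hx', hval⟩
      exact hx (by rwa [← Subtype.ext hval.symm] at hx')
    · rintro ⟨y', hy', hval⟩
      exact hy (by rwa [← Subtype.ext hval.symm] at hy')
    · intro hr
      apply hnr
      have hval : Subtype.val '' {v : S | v ∉ c} = S \ Subtype.val '' c := by
        ext v
        constructor
        · rintro ⟨v', hv', rfl⟩
          exact ⟨v'.2, fun ⟨w, hw, hval⟩ => hv' (by rwa [← Subtype.ext hval.symm] at hw)⟩
        · rintro ⟨hv, hnc⟩
          exact ⟨⟨v, hv⟩, fun hmem => hnc ⟨⟨v, hv⟩, hmem, rfl⟩, rfl⟩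
      rw [← hval] at hr
      have := reach_to_subtype (t := {v : S | v ∉ c}) hr ⟨x, hx, rfl⟩ ⟨y, hy, rfl⟩
      convert this using 2 <;> rfl

variable (X)

/-- Every vertex of `b` has a neighbour in every component of `S \ b`. -/
def Full (S b : Set V) : Prop :=
  ∀ x ∈ b, ∀ y ∈ S \ b, ∃ z ∈ S \ b, X.Adj x z ∧ Reach X (S \ b) z y

def Good (S b : Set V) : Prop := X.IsClique b ∧ b ⊆ S ∧ b ≠ S ∧ Full X S b

/-- `U` is a union of components of `A`. -/
def Sat (A U : Set V) : Prop :=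
  U ⊆ A ∧ ∀ u ∈ U, ∀ v ∈ A, Reach X A u v → v ∈ U

variable {X}

lemma sat_comp {A : Set V} (a : V) : Sat X A {w ∈ A | Reach X A a w} :=
  ⟨fun _ h => h.1, fun _ hu v hv hr => ⟨hv, hu.2.trans hr⟩⟩

lemma sat_diff {A U : Set V} (hU : Sat X A U) : Sat X A (A \ U) :=
  ⟨Set.diff_subset, fun u hu v hv hr => ⟨hv, fun hvU => hu.2 (hU.2 v hvU u hu.1 hr.symm)⟩⟩

section Heredity

variable {S e U : Set V}
  (he_clq : X.IsClique e) (heS : e ⊆ S)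
  (hU : Sat X (S \ e) U) (hUne : U.Nonempty) (hU'ne : ((S \ e) \ U).Nonempty)

include he_clq heS hU hUne hU'ne

omit hUne hU'ne in
lemma piece_subset : e ∪ U ⊆ S := Set.union_subset heS (hU.1.trans Set.diff_subset)

omit hUne hU'ne in
/-- A set closed within the piece minus `b` and avoiding `e \ b` is closed in `S \ b`. -/
lemma closed_lift {b C : Set V} (hC : C ⊆ (e ∪ U) \ b)
    (hCcl : ∀ w ∈ C, ∀ v ∈ (e ∪ U) \ b, X.Adj w v → v ∈ C)
    (hCe : ∀ w ∈ C, w ∉ e \ b) :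
    ∀ w ∈ C, ∀ v ∈ S \ b, X.Adj w v → v ∈ C := by
  intro w hw v hv hadj
  have hwP := hC hw
  have hwU : w ∈ U := by
    rcases hwP.1 with h | h
    · exact absurd ⟨h, hwP.2⟩ (hCe w hw)
    · exact h
  by_cases hve : v ∈ e
  · exact hCcl w hw v ⟨Or.inl hve, hv.2⟩ hadj
  · have hvU : v ∈ U := hU.2 w hwU v ⟨hv.1, hve⟩
      (Reach.single (hU.1 hwU) ⟨hv.1, hve⟩ hadj)
    exact hCcl w hw v ⟨Or.inr hvU, hv.2⟩ hadj

omit hUne hU'ne in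
lemma cut_lift {c : Set V} (hc : CutOf X (e ∪ U) c) : CutOf X S c := by
  obtain ⟨hc_clq, hcP, x0, hx0, y0, hy0, hnr⟩ := hc
  refine ⟨hc_clq, hcP.trans (piece_subset he_clq heS hU), ?_⟩
  set P := e ∪ U with hP
  have hPS : P \ c ⊆ S \ c := fun w hw =>
    ⟨piece_subset he_clq heS hU hw.1, hw.2⟩
  have key : ∀ x y, x ∈ P \ c → y ∈ P \ c → ¬ Reach X (P \ c) x y →
      (∀ w, w ∈ P \ c → Reach X (P \ c) x w → w ∉ e \ c) → MySep X S c := by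
    intro x y hx hy hnr' hcomp
    set C := {w | w ∈ P \ c ∧ Reach X (P \ c) x w} with hCdef
    have hCsub : C ⊆ P \ c := fun _ h => h.1
    have hCcl : ∀ w ∈ C, ∀ v ∈ P \ c, X.Adj w v → v ∈ C :=
      fun w hw v hv hadj => ⟨hv, hw.2.tail ⟨hw.1, hv, hadj⟩⟩
    have hCe : ∀ w ∈ C, w ∉ e \ c := fun w hw => hcomp w hw.1 hw.2
    have hCcl' := closed_lift he_clq heS hU hCsub hCcl hCe
    refine ⟨x, hPS hx, y, hPS hy, fun hr => ?_⟩
    have hyC : y ∈ C := Reach.stay hCcl' ⟨hx, Relation.ReflTransGen.refl⟩ hr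
    exact hnr' hyC.2
  by_cases hec : ∃ z1, z1 ∈ e \ c
  · obtain ⟨z1, hz1⟩ := hec
    have hz1P : z1 ∈ P \ c := ⟨Or.inl hz1.1, hz1.2⟩
    have hsame : ∀ w, w ∈ e \ c → w ∈ P \ c ∧
        Reach X (P \ c) w z1 := by
      intro w hw
      have hwP : w ∈ P \ c := ⟨Or.inl hw.1, hw.2⟩
      refine ⟨hwP, ?_⟩
      rcases eq_or_ne w z1 with rfl | hne
      · exact Relation.ReflTransGen.refl
      · exact Reach.single hwP hz1P (he_clq hw.1 hz1.1 hne)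
    by_cases hxr : Reach X (P \ c) x0 z1
    · refine key y0 x0 hy0 hx0 (fun h => hnr h.symm) ?_
      intro w hwP hrw hwe
      exact hnr (((hrw.trans (hsame w hwe).2).trans hxr.symm).symm)
    · refine key x0 y0 hx0 hy0 hnr ?_
      intro w hwP hrw hwe
      exact hxr (hrw.trans (hsame w hwe).2)
  · push_neg at hec
    refine key x0 y0 hx0 hy0 hnr (fun w _ _ hwe => hec w hwe)

/-- A good clique of `S` contained in a piece is good for the piece. -/
lemma good_lift {b : Set V} (hb : Good X S b) (hbP : b ⊆ e ∪ U) :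
    Good X (e ∪ U) b := by
  obtain ⟨hb_clq, hbS, hbne, hbfull⟩ := hb
  set P := e ∪ U with hPdef
  have hPS := piece_subset he_clq heS hU
  have hdiff : S \ P = (S \ e) \ U := by
    ext v; simp only [Set.mem_diff, Set.mem_union, hPdef]; tauto
  refine ⟨hb_clq, hbP, ?_, ?_⟩
  · intro hbeq
    obtain ⟨u, hu⟩ := hUne
    obtain ⟨y', hy'⟩ := hU'ne
    have hub : u ∈ b := by rw [hbeq]; exact Or.inr hu
    have hy'b : y' ∉ b := fun h => ((by rw [hbeq] at h; exact h : y' ∈ e ∪ U).elim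
      (fun h' => hy'.1.2 h') hy'.2)
    obtain ⟨z, hz, hadj, _⟩ := hbfull u hub y' ⟨hy'.1.1, hy'b⟩
    have hze : z ∉ e := fun h => hz.2 (by rw [hbeq]; exact Or.inl h)
    have hzU : z ∈ U := hU.2 u hu z ⟨hz.1, hze⟩
      (Reach.single (hU.1 hu) ⟨hz.1, hze⟩ hadj)
    exact hz.2 (by rw [hbeq]; exact Or.inr hzU)
  · -- fullness in the piece
    intro x hx y hy
    set C := {w | w ∈ P \ b ∧ Reach X (P \ b) w y} with hCdef
    have hyC : y ∈ C := ⟨hy, Relation.ReflTransGen.refl⟩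
    have hCsub : C ⊆ P \ b := fun _ h => h.1
    have hCcl : ∀ w ∈ C, ∀ v ∈ P \ b, X.Adj w v → v ∈ C :=
      fun w hw v hv hadj => ⟨hv, Relation.ReflTransGen.head ⟨hv, hw.1, hadj.symm⟩ hw.2⟩
    by_cases hCe : ∃ w, w ∈ C ∧ w ∈ e \ b
    · -- the component of `y` meets `e \ b`
      obtain ⟨w, hwC, hwe⟩ := hCe
      by_cases hxe : x ∈ e
      · have hne : x ≠ w := fun h => hwe.2 (h ▸ hx)
        exact ⟨w, hwC.1, he_clq hxe hwe.1 hne, hwC.2⟩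
      · have hxU : x ∈ U := by
          rcases hbP hx with h | h
          · exact absurd h hxe
          · exact h
        obtain ⟨z, hz, hadj, hzy⟩ := hbfull x hx y ⟨hPS hy.1, hy.2⟩
        have hzP : z ∈ P \ b := by
          by_cases hze : z ∈ e
          · exact ⟨Or.inl hze, hz.2⟩
          · exact ⟨Or.inr (hU.2 x hxU z ⟨hz.1, hze⟩
              (Reach.single (hU.1 hxU) ⟨hz.1, hze⟩ hadj)), hz.2⟩
        refine ⟨z, hzP, hadj, ?_⟩
        -- show `z` reaches `y` inside the piece
        set C' := {w' | w' ∈ P \ b ∧ Reach X (P \ b) z w'} with hC'def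
        have hC'sub : C' ⊆ P \ b := fun _ h => h.1
        have hC'cl : ∀ w' ∈ C', ∀ v ∈ P \ b, X.Adj w' v → v ∈ C' :=
          fun w' hw' v hv hadj' => ⟨hv, hw'.2.tail ⟨hw'.1, hv, hadj'⟩⟩
        by_cases hC'e : ∃ w'', w'' ∈ C' ∧ w'' ∈ e \ b
        · obtain ⟨w'', hw''C, hw''e⟩ := hC'e
          have hww : Reach X (P \ b) w'' w := by
            rcases eq_or_ne w'' w with rfl | hne
            · exact Relation.ReflTransGen.refl
            · exact Reach.single hw''C.1 hwC.1 (he_clq hw''e.1 hwe.1 hne)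
          exact ((hw''C.2.trans hww).trans hwC.2).symm.symm
        · push_neg at hC'e
          have hC'cl' := closed_lift he_clq heS hU hC'sub hC'cl hC'e
          have hzC' : z ∈ C' := ⟨hzP, Relation.ReflTransGen.refl⟩
          have hyC' : y ∈ C' := Reach.stay hC'cl' hzC' hzy
          exact hyC'.2
    · push_neg at hCe
      have hCcl' := closed_lift he_clq heS hU hCsub hCcl hCe
      obtain ⟨z, hz, hadj, hzy⟩ := hbfull x hx y ⟨hPS hy.1, hy.2⟩
      have hzC : z ∈ C := Reach.stay hCcl' hyC hzy.symm
      exact ⟨z, hzC.1, hadj, hzC.2⟩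

/-- The boundary clique `e` is good for the piece `e ∪ U`. -/
lemma good_piece (hfull : Full X S e) : Good X (e ∪ U) e := by
  have hdisj : ∀ u ∈ U, u ∉ e := fun u hu => (hU.1 hu).2
  have hPe : (e ∪ U) \ e = U := by
    ext v
    simp only [Set.mem_diff, Set.mem_union]
    exact ⟨fun ⟨h, h2⟩ => h.resolve_left h2, fun h => ⟨Or.inr h, hdisj v h⟩⟩
  refine ⟨he_clq, Set.subset_union_left, ?_, ?_⟩
  · intro hPeq
    obtain ⟨u, hu⟩ := hUne
    exact hdisj u hu (by rw [hPeq]; exact Or.inr hu)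
  · intro x hx y hy
    rw [hPe] at hy ⊢
    obtain ⟨z, hz, hadj, hzy⟩ := hfull x hx y (hU.1 hy)
    have hzU : z ∈ U := hU.2 y hy z hz hzy.symm
    refine ⟨z, hzU, hadj, ?_⟩
    have := hzy.restrict
    refine this.mono (fun w hw => ?_)
    exact hU.2 z hzU w hw.1 hw.2

end Heredity

/-- Every vertex of an inclusion-minimal complete cut has a neighbour in every
component of the complement. -/
lemma full_of_min {S e : Set V} (hcut : CutOf X S e)
    (hmin : ∀ c, CutOf X S c → c ⊆ e → c = e) : Full X S e := by
  intro x hx y hy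
  by_contra hcon
  push_neg at hcon
  obtain ⟨he_clq, heS, a, ha, b, hb, hnr⟩ := hcut
  -- the component of `y` in `S \ e`
  set Cy := {w | w ∈ S \ e ∧ Reach X (S \ e) y w} with hCy
  have hxCy : ∀ w ∈ Cy, ¬ X.Adj x w := by
    intro w hw hadj
    exact hcon w hw.1 hadj hw.2.symm
  -- `e \ {x}` is still a complete cut
  have hcut' : CutOf X S (e \ {x}) := by
    refine ⟨he_clq.subset Set.diff_subset, Set.diff_subset.trans heS, ?_⟩
    have hsub : S \ e ⊆ S \ (e \ {x}) := fun w hw =>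
      ⟨hw.1, fun h => hw.2 h.1⟩
    have ht : ∃ t, t ∈ S \ e ∧ ¬ Reach X (S \ e) y t := by
      by_cases hra : Reach X (S \ e) y a
      · exact ⟨b, hb, fun h => hnr (hra.symm.trans h)⟩
      · exact ⟨a, ha, hra⟩
    obtain ⟨t, htm, htr⟩ := ht
    refine ⟨y, hsub hy, t, hsub htm, ?_⟩
    intro hr
    -- reachability in `S \ (e \ {x})` from `y` stays in `Cy`
    have hstay : ∀ u ∈ Cy, ∀ v ∈ S \ (e \ {x}), X.Adj u v → v ∈ Cy := by
      intro u hu v hv hadj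
      rcases eq_or_ne v x with rfl | hne
      · exact absurd hadj.symm (hxCy u hu)
      · have hvSe : v ∈ S \ e := ⟨hv.1, fun h => hv.2 ⟨h, hne⟩⟩
        exact ⟨hvSe, hu.2.tail ⟨hu.1, hvSe, hadj⟩⟩
    have : t ∈ Cy := Reach.stay hstay ⟨hy, Relation.ReflTransGen.refl⟩ hr
    exact htr this.2
  have := hmin _ hcut' Set.diff_subset
  have hxx : x ∈ e \ {x} := by rw [this]; exact hx
  exact hxx.2 rfl


section Glue
open SimpleGraph


variable {ι1 ι2 : Type*}

/-- Glue two graphs by a single edge between `r1` and `r2`. -/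
def glue (T1 : SimpleGraph ι1) (T2 : SimpleGraph ι2) (r1 : ι1) (r2 : ι2) :
    SimpleGraph (ι1 ⊕ ι2) :=
  (T1 ⊕g T2) ⊔ fromEdgeSet {s(Sum.inl r1, Sum.inr r2)}

variable {T1 : SimpleGraph ι1} {T2 : SimpleGraph ι2} {r1 : ι1} {r2 : ι2}

lemma glue_adj_ll {a b : ι1} : (glue T1 T2 r1 r2).Adj (Sum.inl a) (Sum.inl b) ↔ T1.Adj a b := by
  simp [glue, Sym2.eq_iff]

lemma glue_adj_rr {a b : ι2} : (glue T1 T2 r1 r2).Adj (Sum.inr a) (Sum.inr b) ↔ T2.Adj a b := by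
  simp [glue, Sym2.eq_iff]

lemma glue_adj_lr {a : ι1} {b : ι2} :
    (glue T1 T2 r1 r2).Adj (Sum.inl a) (Sum.inr b) ↔ a = r1 ∧ b = r2 := by
  simp [glue, Sym2.eq_iff]

lemma glue_adj_rl {a : ι2} {b : ι1} :
    (glue T1 T2 r1 r2).Adj (Sum.inr a) (Sum.inl b) ↔ b = r1 ∧ a = r2 := by
  constructor
  · intro h; have := h.symm; rw [glue_adj_lr] at this; exact this
  · rintro ⟨rfl, rfl⟩; exact (glue_adj_lr.2 ⟨rfl, rfl⟩).symm

lemma glue_connected (h1 : T1.Connected) (h2 : T2.Connected) :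
    (glue T1 T2 r1 r2).Connected := by
  let hhom1 : T1 →g glue T1 T2 r1 r2 :=
    ⟨Sum.inl, fun h => glue_adj_ll.2 h⟩
  let hhom2 : T2 →g glue T1 T2 r1 r2 :=
    ⟨Sum.inr, fun h => glue_adj_rr.2 h⟩
  have hcross : (glue T1 T2 r1 r2).Reachable (Sum.inl r1) (Sum.inr r2) :=
    (glue_adj_lr.2 ⟨rfl, rfl⟩).reachable
  have key : ∀ z : ι1 ⊕ ι2, (glue T1 T2 r1 r2).Reachable z (Sum.inl r1) := by
    rintro (a | b)
    · exact (h1.preconnected a r1).map hhom1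
    · exact ((h2.preconnected b r2).map hhom2).trans hcross.symm
  haveI : Nonempty (ι1 ⊕ ι2) := ⟨Sum.inl r1⟩
  exact ⟨fun x y => (key x).trans (key y).symm⟩


variable {W : Type*}

lemma del_adj {G : SimpleGraph W} {e : Sym2 W} {u v : W} :
    (G \ SimpleGraph.fromEdgeSet {e}).Adj u v ↔ G.Adj u v ∧ s(u, v) ≠ e := by
  simp only [SimpleGraph.sdiff_adj, SimpleGraph.fromEdgeSet_adj, Set.mem_singleton_iff]
  constructor
  · rintro ⟨h, h2⟩
    exact ⟨h, fun he => h2 ⟨he, h.ne⟩⟩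
  · rintro ⟨h, h2⟩
    exact ⟨h, fun ⟨he, _⟩ => h2 he⟩

variable {ι1 ι2 : Type*} {T1 : SimpleGraph ι1} {T2 : SimpleGraph ι2} {r1 : ι1} {r2 : ι2}

/-- Deleting the cross edge, reachability preserves sides. -/
lemma glue_side {x y : ι1 ⊕ ι2}
    (h : ((glue T1 T2 r1 r2) \
      SimpleGraph.fromEdgeSet {s(Sum.inl r1, Sum.inr r2)}).Reachable x y) :
    x.isLeft = y.isLeft := by
  obtain ⟨p⟩ := h
  induction p with
  | nil => rfl
  | @cons a b c hab _ ih =>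
      rw [← ih]
      rw [del_adj] at hab
      obtain ⟨hadj, hne⟩ := hab
      rcases a with a | a <;> rcases b with b | b
      · rfl
      · rw [glue_adj_lr] at hadj
        exact absurd (by rw [hadj.1, hadj.2]) hne
      · rw [glue_adj_rl] at hadj
        exact absurd (by rw [hadj.1, hadj.2]; exact Sym2.eq_swap) hne
      · rfl

/-- Project a walk avoiding a deleted left edge to the left tree. -/
lemma glue_projL {a b : ι1} {x y : ι1 ⊕ ι2}
    (h : ((glue T1 T2 r1 r2) \
      SimpleGraph.fromEdgeSet {s(Sum.inl a, Sum.inl b)}).Reachable x y) :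
    (T1 \ SimpleGraph.fromEdgeSet {s(a, b)}).Reachable
      (Sum.elim id (fun _ => r1) x) (Sum.elim id (fun _ => r1) y) := by
  obtain ⟨p⟩ := h
  induction p with
  | nil => rfl
  | @cons u v w huv p ih =>
      rw [del_adj] at huv
      obtain ⟨hadj, hne⟩ := huv
      rcases u with u | u <;> rcases v with v | v
      · rw [glue_adj_ll] at hadj
        refine (SimpleGraph.Adj.reachable ?_).trans ih
        rw [del_adj]
        refine ⟨hadj, fun he => hne ?_⟩
        simp only [Sym2.eq_iff] at he ⊢
        rcases he with ⟨rfl, rfl⟩ | ⟨rfl, rfl⟩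
        · left; exact ⟨rfl, rfl⟩
        · right; exact ⟨rfl, rfl⟩
      · rw [glue_adj_lr] at hadj
        simpa [hadj.1] using ih
      · rw [glue_adj_rl] at hadj
        simpa [hadj.1] using ih
      · exact ih

/-- Project a walk avoiding a deleted right edge to the right tree. -/
lemma glue_projR {a b : ι2} {x y : ι1 ⊕ ι2}
    (h : ((glue T1 T2 r1 r2) \
      SimpleGraph.fromEdgeSet {s(Sum.inr a, Sum.inr b)}).Reachable x y) :
    (T2 \ SimpleGraph.fromEdgeSet {s(a, b)}).Reachable
      (Sum.elim (fun _ => r2) id x) (Sum.elim (fun _ => r2) id y) := by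
  obtain ⟨p⟩ := h
  induction p with
  | nil => rfl
  | @cons u v w huv p ih =>
      rw [del_adj] at huv
      obtain ⟨hadj, hne⟩ := huv
      rcases u with u | u <;> rcases v with v | v
      · exact ih
      · rw [glue_adj_lr] at hadj
        simpa [hadj.2] using ih
      · rw [glue_adj_rl] at hadj
        simpa [hadj.2] using ih
      · rw [glue_adj_rr] at hadj
        refine (SimpleGraph.Adj.reachable ?_).trans ih
        rw [del_adj]
        refine ⟨hadj, fun he => hne ?_⟩
        simp only [Sym2.eq_iff] at he ⊢
        rcases he with ⟨rfl, rfl⟩ | ⟨rfl, rfl⟩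
        · left; exact ⟨rfl, rfl⟩
        · right; exact ⟨rfl, rfl⟩

lemma glue_isTree (h1 : T1.IsTree) (h2 : T2.IsTree) : (glue T1 T2 r1 r2).IsTree := by
  constructor
  · exact glue_connected h1.isConnected h2.isConnected
  · rw [SimpleGraph.isAcyclic_iff_forall_adj_isBridge]
    rintro (u | u) (v | v) hadj
    · rw [SimpleGraph.isBridge_iff]
      intro hr
      have hT1 : T1.Adj u v := glue_adj_ll.1 hadj
      have hb := (SimpleGraph.isAcyclic_iff_forall_adj_isBridge.1 h1.IsAcyclic) hT1
      rw [SimpleGraph.isBridge_iff] at hb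
      exact hb (by simpa using glue_projL hr : (T1 \ fromEdgeSet {s(u, v)}).Reachable u v)
    · rw [SimpleGraph.isBridge_iff]
      intro hr
      obtain ⟨rfl, rfl⟩ := glue_adj_lr.1 hadj
      simpa using glue_side hr
    · rw [SimpleGraph.isBridge_iff]
      intro hr
      obtain ⟨rfl, rfl⟩ := glue_adj_rl.1 hadj
      have : s(Sum.inr u, Sum.inl v) = s(Sum.inl v, (Sum.inr u : ι1 ⊕ ι2)) := Sym2.eq_swap
      rw [this] at hr
      simpa using glue_side hr
    · rw [SimpleGraph.isBridge_iff]
      intro hr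
      have hT2 : T2.Adj u v := glue_adj_rr.1 hadj
      have hb := (SimpleGraph.isAcyclic_iff_forall_adj_isBridge.1 h2.IsAcyclic) hT2
      rw [SimpleGraph.isBridge_iff] at hb
      exact hb (by simpa using glue_projR hr : (T2 \ fromEdgeSet {s(u, v)}).Reachable u v)

end Glue

section Main
open SimpleGraph

variable {V : Type} [Fintype V] {X : SimpleGraph V}

/-- The conclusion of the recursive decomposition lemma. -/
def Decomp (X : SimpleGraph V) (S : Set V) : Prop :=
  ∃ (ι : Type) (_ : Fintype ι) (T : SimpleGraph ι) (Vs : ι → Set V),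
    T.IsTree ∧ (∀ s, Vs s ⊆ S) ∧
    (∀ s, ¬ ∃ c : Set (Vs s), CompleteCut (X.induce (Vs s)) c) ∧
    (∀ r s, T.Adj r s →
      CompleteCut X (Vs r ∩ Vs s) ∧ Vs r ∩ Vs s ⊂ Vs r ∧ Vs r ∩ Vs s ⊂ Vs s) ∧
    (∀ c, X.IsClique c → c ⊆ S → ∃ s, c ⊆ Vs s) ∧
    (∀ b, Good X S b → ∃ s, b ⊂ Vs s)

lemma prime_case {S : Set V} (hprime : ¬ ∃ c, CutOf X S c) : Decomp X S := by
  haveI : Nonempty Unit := ⟨()⟩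
  refine ⟨Unit, inferInstance, ⊥, fun _ => S, ⟨⟨fun u v => Reachable.refl u⟩,
    SimpleGraph.isAcyclic_bot⟩, fun _ => le_refl S, ?_, ?_, ?_, ?_⟩
  · rintro s ⟨c, hc⟩
    exact hprime ⟨_, cutOf_of_completeCut hc⟩
  · intro r s h
    exact h.elim
  · intro c _ hcS
    exact ⟨(), hcS⟩
  · rintro b ⟨_, hbS, hbne, _⟩
    exact ⟨(), ⟨hbS, fun h => hbne (subset_antisymm hbS h)⟩⟩

lemma rec_main : ∀ (n : ℕ) (S : Set V), S.ncard ≤ n →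
    (∀ c, CutOf X S c → MySep X Set.univ c) → Decomp X S := by
  intro n
  induction n with
  | zero =>
      intro S hcard _
      apply prime_case
      rintro ⟨c, _, _, x, hx, _⟩
      have hS : S = ∅ := (Set.ncard_eq_zero (Set.toFinite S)).mp (Nat.le_zero.mp hcard)
      rw [hS] at hx
      exact hx.1
  | succ n ih =>
      intro S hcard hinv
      by_cases hprime : ∃ c, CutOf X S c
      swap
      · exact prime_case hprime
      · obtain ⟨e, hecut, hmin'⟩ : ∃ e ∈ {c | CutOf X S c}, ∀ c ∈ {c | CutOf X S c},
            id c ≤ id e → id e = id c := by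
          obtain ⟨e, he⟩ := Set.Finite.exists_minimal (Set.toFinite {c | CutOf X S c}) hprime
          exact ⟨e, he.1, fun c hc hce => subset_antisymm (he.2 hc hce) hce⟩
        simp only [id] at hmin'
        have hmin : ∀ c, CutOf X S c → c ⊆ e → c = e :=
          fun c hc hce => (hmin' c hc hce).symm
        have hfull : Full X S e := full_of_min hecut hmin
        obtain ⟨he_clq, heS, a, ha, b0, hb0, hnr⟩ := hecut
        have hecut : CutOf X S e := ⟨he_clq, heS, a, ha, b0, hb0, hnr⟩
        set U : Set V := {w | w ∈ S \ e ∧ Reach X (S \ e) a w} with hUdef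
        have hUsat : Sat X (S \ e) U := sat_comp a
        set U' : Set V := (S \ e) \ U with hU'def
        have hU'sat : Sat X (S \ e) U' := sat_diff hUsat
        have haU : a ∈ U := ⟨ha, Relation.ReflTransGen.refl⟩
        have hb0U : b0 ∈ U' := ⟨hb0, fun h => hnr h.2⟩
        have hUne : U.Nonempty := ⟨a, haU⟩
        have hU'ne : U'.Nonempty := ⟨b0, hb0U⟩
        have hU'c : ((S \ e) \ U').Nonempty := ⟨a, ⟨ha, fun h => h.2 haU⟩⟩
        have hP1S : e ∪ U ⊆ S := piece_subset he_clq heS hUsat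
        have hP2S : e ∪ U' ⊆ S := piece_subset he_clq heS hU'sat
        have hP1card : (e ∪ U).ncard ≤ n := by
          have hss : e ∪ U ⊂ S := by
            refine ⟨hP1S, fun hs => ?_⟩
            rcases hs hb0.1 with h | h
            · exact hb0.2 h
            · exact hb0U.2 h
          have := Set.ncard_lt_ncard hss (Set.toFinite S)
          omega
        have hP2card : (e ∪ U').ncard ≤ n := by
          have hss : e ∪ U' ⊂ S := by
            refine ⟨hP2S, fun hs => ?_⟩
            rcases hs (ha.1) with h | h
            · exact ha.2 h
            · exact h.2 haU
          have := Set.ncard_lt_ncard hss (Set.toFinite S)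
          omega
        obtain ⟨ι1, f1, T1, Vs1, ht1, hsub1, hnc1, hadj1, hcov1, hgood1⟩ :=
          ih (e ∪ U) hP1card (fun c hc => hinv c (cut_lift he_clq heS hUsat hc))
        obtain ⟨ι2, f2, T2, Vs2, ht2, hsub2, hnc2, hadj2, hcov2, hgood2⟩ :=
          ih (e ∪ U') hP2card (fun c hc => hinv c (cut_lift he_clq heS hU'sat hc))
        obtain ⟨r1, hr1⟩ := hgood1 e (good_piece he_clq heS hUsat hUne hU'ne hfull)
        obtain ⟨r2, hr2⟩ := hgood2 e (good_piece he_clq heS hU'sat hU'ne hU'c hfull)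
        have hinter : Vs1 r1 ∩ Vs2 r2 = e := by
          apply subset_antisymm
          · rintro v ⟨hv1, hv2⟩
            rcases hsub1 r1 hv1 with h | h
            · exact h
            · rcases hsub2 r2 hv2 with h' | h'
              · exact h'
              · exact absurd h h'.2
          · exact Set.subset_inter hr1.1 hr2.1
        have hecc : CompleteCut X e := ⟨he_clq, separatesGraph_iff.mpr (hinv e hecut)⟩
        -- a clique of `S` is contained in one of the two pieces
        have hcliquePiece : ∀ c, X.IsClique c → c ⊆ S →
            c ⊆ e ∪ U ∨ c ⊆ e ∪ U' := by
          intro c hc_clq hcS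
          by_cases hce : ∀ v ∈ c, v ∈ e
          · exact Or.inl (fun v hv => Or.inl (hce v hv))
          · push_neg at hce
            obtain ⟨u, hu, hue⟩ := hce
            have huSe : u ∈ S \ e := ⟨hcS hu, hue⟩
            have hkey : ∀ (W : Set V), Sat X (S \ e) W → u ∈ W → c ⊆ e ∪ W := by
              intro W hW huW v hv
              by_cases hve : v ∈ e
              · exact Or.inl hve
              · have hvSe : v ∈ S \ e := ⟨hcS hv, hve⟩
                rcases eq_or_ne u v with rfl | hne
                · exact Or.inr huW
                · exact Or.inr (hW.2 u huW v hvSe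
                    (Reach.single huSe hvSe (hc_clq hu hv hne)))
            by_cases huU : u ∈ U
            · exact Or.inl (hkey U hUsat huU)
            · exact Or.inr (hkey U' hU'sat ⟨huSe, huU⟩)
        refine ⟨ι1 ⊕ ι2, inferInstance, glue T1 T2 r1 r2, Sum.elim Vs1 Vs2,
          glue_isTree ht1 ht2, ?_, ?_, ?_, ?_, ?_⟩
        · rintro (s | s)
          · exact (hsub1 s).trans hP1S
          · exact (hsub2 s).trans hP2S
        · rintro (s | s)
          · exact hnc1 s
          · exact hnc2 s
        · rintro (r | r) (s | s) h
          · exact hadj1 r s (glue_adj_ll.1 h)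
          · obtain ⟨h1, h2⟩ := glue_adj_lr.1 h
            subst h1; subst h2
            simp only [Sum.elim_inl, Sum.elim_inr]
            rw [hinter]
            exact ⟨hecc, hr1, hr2⟩
          · obtain ⟨h1, h2⟩ := glue_adj_rl.1 h
            subst h1; subst h2
            simp only [Sum.elim_inl, Sum.elim_inr]
            rw [Set.inter_comm, hinter]
            exact ⟨hecc, hr2, hr1⟩
          · exact hadj2 r s (glue_adj_rr.1 h)
        · intro c hc_clq hcS
          rcases hcliquePiece c hc_clq hcS with h | h
          · obtain ⟨s, hs⟩ := hcov1 c hc_clq h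
            exact ⟨Sum.inl s, hs⟩
          · obtain ⟨s, hs⟩ := hcov2 c hc_clq h
            exact ⟨Sum.inr s, hs⟩
        · intro b hb
          rcases hcliquePiece b hb.1 hb.2.1 with h | h
          · obtain ⟨s, hs⟩ := hgood1 b (good_lift he_clq heS hUsat hUne hU'ne hb h)
            exact ⟨Sum.inl s, hs⟩
          · obtain ⟨s, hs⟩ := hgood2 b (good_lift he_clq heS hU'sat hU'ne hU'c hb h)
            exact ⟨Sum.inr s, hs⟩

end Main

end CCD

/-- Every finite simple graph admits a complete-cut-decomposition:
there are a finite tree `T` and induced subgraphs `(V_s)` of `X` indexed by the vertices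
of `T` such that every edge of `X` lies in some `V_s`, no `V_s` has a complete cut, and
for adjacent `r, s` the intersection `V_r ∩ V_s` is a complete cut of `X` properly
contained in both `V_r` and `V_s`. -/
theorem exists_complete_cut_decomposition {V : Type} [Fintype V] (X : SimpleGraph V) :
    ∃ (ι : Type) (_ : Fintype ι) (T : SimpleGraph ι) (Vs : ι → Set V),
      T.IsTree ∧
      (∀ u v : V, X.Adj u v → ∃ s : ι, u ∈ Vs s ∧ v ∈ Vs s) ∧
      (∀ s : ι, ¬ ∃ c : Set (Vs s), CompleteCut (X.induce (Vs s)) c) ∧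
      (∀ r s : ι, T.Adj r s →
        CompleteCut X (Vs r ∩ Vs s) ∧ Vs r ∩ Vs s ⊂ Vs r ∧ Vs r ∩ Vs s ⊂ Vs s) := by
  classical
  obtain ⟨ι, fι, T, Vs, ht, hsub, hnc, hadj, hcov, hgood⟩ :=
    CCD.rec_main (X := X) (Fintype.card V) Set.univ
      (by rw [Set.ncard_univ, Nat.card_eq_fintype_card]) (fun c hc => hc.2.2)
  refine ⟨ι, fι, T, Vs, ht, ?_, hnc, hadj⟩
  intro u v huv
  have hclq : X.IsClique {u, v} := by
    intro x hx y hy hxy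
    rcases hx with rfl | rfl <;> rcases hy with rfl | rfl
    · exact absurd rfl hxy
    · exact huv
    · exact huv.symm
    · exact absurd rfl hxy
  obtain ⟨s, hs⟩ := hcov {u, v} hclq (Set.subset_univ _)
  exact ⟨s, hs (by simp), hs (by simp)⟩
end CoarseGraph
end
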